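/- arXiv:2209.08395 — 5 statements merged into one kernel-verified Lean document; each statement's English description precedes it below -/
import Mathlib

section
/- Let h : (0,∞) → (0,∞) be a strictly positive non-decreasing function such that s·h(r) ≤ r·h(s) for all 0 < r ≤ s. Let φ : (0,∞) → [0,∞) be a nonnegative non-increasing function that is integrable on (0,s) for every s > 0. Then for all r, s ∈ (0,∞), min{1/h(r), 1/h(s)} · ∫_0^s φ(t) dt ≤ (1/h(r)) · ∫_0^r φ(t) dt. -/
open MeasureTheory Set

/-- The core pointwise estimate behind the Frank–Laptev–Weidl type lemma:
if `h` is positive, non-decreasing on `(0,∞)` and satisfies `s·h(r) ≤ r·h(s)` for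
`0 < r ≤ s`, and `φ` is nonnegative, non-increasing and locally integrable on `(0,∞)`,
then `min{1/h(r), 1/h(s)} · ∫_0^s φ ≤ (1/h(r)) · ∫_0^r φ` for all `r, s > 0`. -/
theorem min_mul_integral_le (h : ℝ → ℝ)
    (hpos : ∀ r, 0 < r → 0 < h r)
    (hmono : ∀ r s, 0 < r → r ≤ s → h r ≤ h s)
    (hhom : ∀ r s, 0 < r → r ≤ s → s * h r ≤ r * h s)
    (φ : ℝ → ℝ)
    (hφ0 : ∀ t, 0 < t → 0 ≤ φ t)
    (hφmono : ∀ t₁ t₂, 0 < t₁ → t₁ ≤ t₂ → φ t₂ ≤ φ t₁)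
    (hφint : ∀ s, 0 < s → IntegrableOn φ (Ioc 0 s))
    (r s : ℝ) (hr : 0 < r) (hs : 0 < s) :
    min (1 / h r) (1 / h s) * ∫ t in Ioc 0 s, φ t
      ≤ (1 / h r) * ∫ t in Ioc 0 r, φ t := by
  have hhr := hpos r hr
  have hhs := hpos s hs
  rcases le_total s r with hsr | hrs
  · have hmin : min (1 / h r) (1 / h s) = 1 / h r :=
      min_eq_left (one_div_le_one_div_of_le hhs (hmono s r hs hsr))
    rw [hmin]
    apply mul_le_mul_of_nonneg_left _ (by positivity)
    apply setIntegral_mono_set (hφint r hr)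
    · filter_upwards [ae_restrict_mem measurableSet_Ioc] with t ht
      exact hφ0 t ht.1
    · exact HasSubset.Subset.eventuallyLE (Ioc_subset_Ioc_right hsr)
  · have hmin : min (1 / h r) (1 / h s) = 1 / h s :=
      min_eq_right (one_div_le_one_div_of_le hhr (hmono r s hr hrs))
    rw [hmin]
    have hconst : ∀ a b : ℝ, a ≤ b → (∫ _ in Ioc a b, φ r) = (b - a) * φ r := by
      intro a b hab
      rw [setIntegral_const, measureReal_def, Real.volume_Ioc, ENNReal.toReal_ofReal (by linarith), smul_eq_mul]
    have hIr : r * φ r ≤ ∫ t in Ioc 0 r, φ t := by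
      have heq : (∫ _ in Ioc 0 r, φ r) = r * φ r := by
        rw [hconst 0 r hr.le]; ring
      rw [← heq]
      refine setIntegral_mono_on ((integrableOn_const_iff).2 (Or.inr ?_)) (hφint r hr)
        measurableSet_Ioc (fun t ht => hφmono t r ht.1 ht.2)
      rw [Real.volume_Ioc]; exact ENNReal.ofReal_lt_top
    have hint2 : IntegrableOn φ (Ioc r s) :=
      (hφint s hs).mono_set (Ioc_subset_Ioc_left hr.le)
    have hmid : (∫ t in Ioc r s, φ t) ≤ (s - r) * φ r := by
      rw [← hconst r s hrs]
      refine setIntegral_mono_on hint2 ((integrableOn_const_iff).2 (Or.inr ?_))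
        measurableSet_Ioc (fun t ht => hφmono r t hr ht.1.le)
      rw [Real.volume_Ioc]; exact ENNReal.ofReal_lt_top
    have hsplit : (∫ t in Ioc 0 s, φ t)
        = (∫ t in Ioc 0 r, φ t) + ∫ t in Ioc r s, φ t := by
      rw [← setIntegral_union (Ioc_disjoint_Ioc_of_le le_rfl) measurableSet_Ioc (hφint r hr) hint2,
        Ioc_union_Ioc_eq_Ioc hr.le hrs]
    have hA0 : 0 ≤ ∫ t in Ioc 0 r, φ t :=
      setIntegral_nonneg measurableSet_Ioc (fun t ht => hφ0 t ht.1)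
    have hhom' := hhom r s hr hrs
    have hφr := hφ0 r hr
    rw [hsplit, div_mul_eq_mul_div, div_mul_eq_mul_div, div_le_div_iff₀ hhs hhr]
    set A := ∫ t in Ioc 0 r, φ t
    set B := ∫ t in Ioc r s, φ t
    have h1 : r * ((A + B) * h r) ≤ r * ((A + (s - r) * φ r) * h r) :=
      mul_le_mul_of_nonneg_left
        (mul_le_mul_of_nonneg_right (by linarith) hhr.le) hr.le
    have h2 : r * ((A + (s - r) * φ r) * h r) ≤ s * (A * h r) := by
      nlinarith [mul_le_mul_of_nonneg_left hIr (mul_nonneg (sub_nonneg.2 hrs) hhr.le)]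
    have h3 : s * (A * h r) ≤ r * (A * h s) := by
      nlinarith [mul_le_mul_of_nonneg_left hhom' hA0]
    have h4 := le_of_mul_le_mul_left (le_trans h1 (le_trans h2 h3)) hr
    linarith
end

section
/- Let 1 < p < ∞. Let g : (0,∞) → [0,∞) be a nonnegative measurable function, and let h : (0,∞) → (0,∞) be a strictly positive non-decreasing function such that s·h(r) ≤ r·h(s) for all 0 < r ≤ s. Let f : (0,∞) → ℝ be measurable and let φ : (0,∞) → [0,∞) be a nonnegative non-increasing function such that ∫_0^s |f(t)| dt ≤ ∫_0^s φ(t) dt for all s > 0 (in particular this holds when φ is the symmetric decreasing rearrangement of f). Then ∫_0^∞ g(r) · ( sup_{0<s<∞} | min{1/h(r), 1/h(s)} · ∫_0^s f(t) dt | )^p dr ≤ ∫_0^∞ g(r) · ( (1/h(r)) · ∫_0^r φ(t) dt )^p dr. -/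
open MeasureTheory Set
open scoped ENNReal

/-- Key lemma (weighted Hardy-type inequality with rearrangement on the half-line):
for `1 < p < ∞`, nonnegative measurable `g`, positive non-decreasing `h` with
`s·h(r) ≤ r·h(s)` for `0 < r ≤ s`, measurable `f` locally integrable near `0`, and
nonnegative non-increasing `φ` with `∫_0^s |f| ≤ ∫_0^s φ` for all `s > 0`, one has
`∫_0^∞ g(r) (sup_{s>0} |min{1/h(r),1/h(s)} ∫_0^s f|)^p dr
  ≤ ∫_0^∞ g(r) ((1/h(r)) ∫_0^r φ)^p dr`. -/
theorem key_lemma (p : ℝ) (hp : 1 < p)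
    (g : ℝ → ℝ) (hg : Measurable g) (hg0 : ∀ r, 0 < r → 0 ≤ g r)
    (h : ℝ → ℝ)
    (hpos : ∀ r, 0 < r → 0 < h r)
    (hmono : ∀ r s, 0 < r → r ≤ s → h r ≤ h s)
    (hhom : ∀ r s, 0 < r → r ≤ s → s * h r ≤ r * h s)
    (f : ℝ → ℝ) (hf : Measurable f)
    (hfint : ∀ s, 0 < s → IntegrableOn f (Ioc 0 s))
    (φ : ℝ → ℝ) (hφmeas : Measurable φ)
    (hφ0 : ∀ t, 0 < t → 0 ≤ φ t)
    (hφmono : ∀ t₁ t₂, 0 < t₁ → t₁ ≤ t₂ → φ t₂ ≤ φ t₁)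
    (hHL : ∀ s, 0 < s →
      ∫⁻ t in Ioc 0 s, ENNReal.ofReal |f t| ≤ ∫⁻ t in Ioc 0 s, ENNReal.ofReal (φ t)) :
    ∫⁻ r in Ioi (0 : ℝ), ENNReal.ofReal (g r) *
        (⨆ s ∈ Ioi (0 : ℝ),
          ENNReal.ofReal |min (1 / h r) (1 / h s) * ∫ t in Ioc 0 s, f t|) ^ p
      ≤ ∫⁻ r in Ioi (0 : ℝ), ENNReal.ofReal (g r) *
          (ENNReal.ofReal (1 / h r) * ∫⁻ t in Ioc 0 r, ENNReal.ofReal (φ t)) ^ p := by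
  set Φ : ℝ → ℝ≥0∞ := fun s => ∫⁻ t in Ioc 0 s, ENNReal.ofReal (φ t) with hΦ
  -- |∫ f| ≤ Φ s
  have habs : ∀ s, 0 < s →
      ENNReal.ofReal |∫ t in Ioc 0 s, f t| ≤ Φ s := by
    intro s hs
    have h1 : ENNReal.ofReal |∫ t in Ioc 0 s, f t|
        ≤ ∫⁻ t in Ioc 0 s, ENNReal.ofReal |f t| := by
      rw [← Real.enorm_eq_ofReal_abs]
      calc (‖∫ t in Ioc 0 s, f t‖₊ : ℝ≥0∞)
          ≤ ∫⁻ t in Ioc 0 s, (‖f t‖₊ : ℝ≥0∞) := enorm_integral_le_lintegral_enorm _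
        _ = ∫⁻ t in Ioc 0 s, ENNReal.ofReal |f t| := by
            congr 1; funext t; exact Real.enorm_eq_ofReal_abs (f t)
    exact h1.trans (hHL s hs)
  -- lower bound on Φ r by constant φ r
  have hΦlow : ∀ r, 0 < r → ENNReal.ofReal (φ r) * ENNReal.ofReal r ≤ Φ r := by
    intro r hr
    calc ENNReal.ofReal (φ r) * ENNReal.ofReal r
        = ∫⁻ _ in Ioc (0:ℝ) r, ENNReal.ofReal (φ r) := by
          rw [setLIntegral_const, Real.volume_Ioc, sub_zero]
      _ ≤ Φ r := by
          apply setLIntegral_mono' measurableSet_Ioc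
          intro t ht
          exact ENNReal.ofReal_le_ofReal (hφmono t r ht.1 ht.2)
  -- key pointwise bound
  have key : ∀ r ∈ Ioi (0:ℝ), ∀ s ∈ Ioi (0:ℝ),
      ENNReal.ofReal |min (1 / h r) (1 / h s) * ∫ t in Ioc 0 s, f t|
        ≤ ENNReal.ofReal (1 / h r) * Φ r := by
    intro r hr s hs
    rw [mem_Ioi] at hr hs
    have hhr := hpos r hr
    have hhs := hpos s hs
    have hmin0 : 0 ≤ min (1 / h r) (1 / h s) := le_min (by positivity) (by positivity)
    rw [abs_mul, abs_of_nonneg hmin0,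
      ENNReal.ofReal_mul hmin0]
    rcases le_total s r with hsr | hrs
    · -- s ≤ r : min = 1/h r, and Φ s ≤ Φ r
      have hmin : min (1 / h r) (1 / h s) = 1 / h r :=
        min_eq_left (by
          apply one_div_le_one_div_of_le hhs (hmono s r hs hsr))
      rw [hmin]
      refine mul_le_mul_right ((habs s hs).trans ?_) _
      exact lintegral_mono_set (Ioc_subset_Ioc_right hsr)
    · -- r ≤ s : min = 1/h s, and (1/h s) Φ s ≤ (1/h r) Φ r
      have hmin : min (1 / h r) (1 / h s) = 1 / h s :=
        min_eq_right (by
          apply one_div_le_one_div_of_le hhr (hmono r s hr hrs))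
      rw [hmin]
      have hsplit : Φ s = Φ r + ∫⁻ t in Ioc r s, ENNReal.ofReal (φ t) := by
        rw [hΦ]
        rw [← lintegral_union measurableSet_Ioc (Ioc_disjoint_Ioc_of_le le_rfl),
          Ioc_union_Ioc_eq_Ioc (le_of_lt hr) hrs]
      have htail : (∫⁻ t in Ioc r s, ENNReal.ofReal (φ t))
          ≤ ENNReal.ofReal (φ r) * ENNReal.ofReal (s - r) := by
        calc (∫⁻ t in Ioc r s, ENNReal.ofReal (φ t))
            ≤ ∫⁻ _ in Ioc r s, ENNReal.ofReal (φ r) := by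
              apply setLIntegral_mono' measurableSet_Ioc
              intro t ht
              exact ENNReal.ofReal_le_ofReal (hφmono r t hr (le_of_lt ht.1))
          _ = ENNReal.ofReal (φ r) * ENNReal.ofReal (s - r) := by
              rw [setLIntegral_const, Real.volume_Ioc]
      have htail2 : ENNReal.ofReal (φ r) * ENNReal.ofReal (s - r)
          ≤ Φ r * ENNReal.ofReal ((s - r) / r) := by
        have : ENNReal.ofReal (φ r) * ENNReal.ofReal (s - r)
            = (ENNReal.ofReal (φ r) * ENNReal.ofReal r) * ENNReal.ofReal ((s - r) / r) := by
          rw [mul_assoc, ← ENNReal.ofReal_mul (le_of_lt hr)]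
          congr 2
          field_simp
        rw [this]
        exact mul_le_mul_left (hΦlow r hr) _
      have hΦs : Φ s ≤ Φ r * ENNReal.ofReal (s / r) := by
        calc Φ s = Φ r + ∫⁻ t in Ioc r s, ENNReal.ofReal (φ t) := hsplit
          _ ≤ Φ r + Φ r * ENNReal.ofReal ((s - r) / r) :=
              add_le_add_right (htail.trans htail2) _
          _ = Φ r * (1 + ENNReal.ofReal ((s - r) / r)) := by ring
          _ = Φ r * ENNReal.ofReal (s / r) := by
              congr 1
              rw [← ENNReal.ofReal_one, ← ENNReal.ofReal_add (by norm_num)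
                (div_nonneg (by linarith) hr.le)]
              congr 1
              field_simp
              ring
      calc ENNReal.ofReal (1 / h s) * ENNReal.ofReal |∫ t in Ioc 0 s, f t|
          ≤ ENNReal.ofReal (1 / h s) * (Φ r * ENNReal.ofReal (s / r)) :=
            mul_le_mul_right ((habs s hs).trans hΦs) _
        _ = ENNReal.ofReal ((1 / h s) * (s / r)) * Φ r := by
            rw [ENNReal.ofReal_mul (by positivity)]
            ring
        _ ≤ ENNReal.ofReal (1 / h r) * Φ r := by
            refine mul_le_mul_left (ENNReal.ofReal_le_ofReal ?_) _
            have h1 : (1 / h s) * (s / r) = s / (h s * r) := by ring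
            rw [h1, div_le_div_iff₀ (by positivity) hhr]
            have := hhom r s hr hrs
            nlinarith
  -- conclude by monotonicity of the integral
  apply setLIntegral_mono' measurableSet_Ioi
  intro r hr
  refine mul_le_mul_right (ENNReal.rpow_le_rpow ?_ (by linarith)) _
  exact iSup₂_le (fun s hs => key r hr s hs)
end

section
/- Let 1 ≤ N < p < ∞. Let f : (0,∞) → ℝ be measurable and let φ : (0,∞) → [0,∞) be a nonnegative non-increasing function such that ∫_0^s |f(t)| dt ≤ ∫_0^s φ(t) dt for all s > 0 (in particular this holds when φ is the symmetric decreasing rearrangement of f). Then ∫_0^∞ r^{N−1} · ( sup_{0<s<∞} | min{1/r, 1/s} · ∫_0^s f(t) dt | )^p dr ≤ (p/(p−N))^p · ∫_0^∞ r^{N−1} φ(r)^p dr. -/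
open MeasureTheory Set
open scoped ENNReal

/-- Weighted special case `g(r) = r^{N-1}`, `h(r) = r` of the key lemma:
for `1 ≤ N < p`, measurable `f` locally integrable near `0`, and nonnegative
non-increasing `φ` with `∫_0^s |f| ≤ ∫_0^s φ` for all `s > 0`,
`∫_0^∞ r^{N-1} (sup_{s>0} |min{1/r,1/s} ∫_0^s f|)^p dr
  ≤ (p/(p-N))^p ∫_0^∞ r^{N-1} φ(r)^p dr`. -/
theorem key_corollary (N : ℕ) (hN : 1 ≤ N) (p : ℝ) (hp : (N : ℝ) < p)
    (f : ℝ → ℝ) (hf : Measurable f)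
    (hfint : ∀ s, 0 < s → IntegrableOn f (Ioc 0 s))
    (φ : ℝ → ℝ) (hφmeas : Measurable φ)
    (hφ0 : ∀ t, 0 < t → 0 ≤ φ t)
    (hφmono : ∀ t₁ t₂, 0 < t₁ → t₁ ≤ t₂ → φ t₂ ≤ φ t₁)
    (hHL : ∀ s, 0 < s →
      ∫⁻ t in Ioc 0 s, ENNReal.ofReal |f t| ≤ ∫⁻ t in Ioc 0 s, ENNReal.ofReal (φ t)) :
    ∫⁻ r in Ioi (0 : ℝ), ENNReal.ofReal (r ^ ((N : ℝ) - 1)) *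
        (⨆ s ∈ Ioi (0 : ℝ),
          ENNReal.ofReal |min (1 / r) (1 / s) * ∫ t in Ioc 0 s, f t|) ^ p
      ≤ ENNReal.ofReal ((p / (p - N)) ^ p) *
        ∫⁻ r in Ioi (0 : ℝ), ENNReal.ofReal (r ^ ((N : ℝ) - 1)) *
          ENNReal.ofReal (φ r) ^ p := by
  have hNR : (1:ℝ) ≤ (N:ℝ) := by exact_mod_cast hN
  have hp1 : 1 < p := lt_of_le_of_lt hNR hp
  have hp0 : (0:ℝ) < p := by linarith
  have hpN : (0:ℝ) < p - N := by linarith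
  have hN0 : (0:ℝ) < (N:ℝ) := by linarith
  -- parameters
  set q : ℝ := p / (p - 1) with hqdef
  set u : ℝ := (p - N) / p with hudef
  set β : ℝ := (N * (p - 1)) / (p * p) with hβdef
  set b : ℝ := (N * (p - 1)) / p with hbdef
  have hu0 : 0 < u := by positivity
  have hq : p.HolderConjugate q := by
    exact (Real.holderConjugate_iff_eq_conjExponent hp1).2 hqdef
  -- the running integral of φ
  set Φ : ℝ → ℝ≥0∞ := fun s => ∫⁻ t in Ioc 0 s, ENNReal.ofReal (φ t) with hΦdef
  have hΦmono : ∀ {s₁ s₂ : ℝ}, s₁ ≤ s₂ → Φ s₁ ≤ Φ s₂ := fun h =>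
    lintegral_mono_set (Ioc_subset_Ioc_right h)
  have hlow : ∀ r : ℝ, 0 < r → ENNReal.ofReal (r * φ r) ≤ Φ r := by
    intro r hr
    have h1 : ENNReal.ofReal (r * φ r)
        = ∫⁻ _ in Ioc (0:ℝ) r, ENNReal.ofReal (φ r) := by
      rw [setLIntegral_const, Real.volume_Ioc, sub_zero,
        ← ENNReal.ofReal_mul (hφ0 r hr), mul_comm]
    rw [h1, hΦdef]
    refine lintegral_mono_ae ?_
    filter_upwards [ae_restrict_mem measurableSet_Ioc] with t ht
    exact ENNReal.ofReal_le_ofReal (hφmono t r ht.1 ht.2)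
  -- the averages (1/r) Φ r are non-increasing
  have havg : ∀ r s : ℝ, 0 < r → r ≤ s →
      ENNReal.ofReal (1 / s) * Φ s ≤ ENNReal.ofReal (1 / r) * Φ r := by
    intro r s hr hrs
    have hs : 0 < s := lt_of_lt_of_le hr hrs
    have hsplit : Φ s = Φ r + ∫⁻ t in Ioc r s, ENNReal.ofReal (φ t) := by
      rw [hΦdef]
      rw [← lintegral_union measurableSet_Ioc (Set.Ioc_disjoint_Ioc_of_le le_rfl),
        Set.Ioc_union_Ioc_eq_Ioc hr.le hrs]
    have h2 : (∫⁻ t in Ioc r s, ENNReal.ofReal (φ t))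
        ≤ ENNReal.ofReal ((s - r) / r) * Φ r := by
      have h21 : (∫⁻ t in Ioc r s, ENNReal.ofReal (φ t))
          ≤ ENNReal.ofReal ((s - r) * φ r) := by
        have hc : ENNReal.ofReal ((s - r) * φ r)
            = ∫⁻ _ in Ioc r s, ENNReal.ofReal (φ r) := by
          rw [setLIntegral_const, Real.volume_Ioc,
            ← ENNReal.ofReal_mul (hφ0 r hr), mul_comm]
        rw [hc]
        refine lintegral_mono_ae ?_
        filter_upwards [ae_restrict_mem measurableSet_Ioc] with t ht
        exact ENNReal.ofReal_le_ofReal (hφmono r t hr ht.1.le)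
      have h22 : (s - r) * φ r = (s - r) / r * (r * φ r) := by
        field_simp
      calc (∫⁻ t in Ioc r s, ENNReal.ofReal (φ t))
          ≤ ENNReal.ofReal ((s - r) * φ r) := h21
        _ = ENNReal.ofReal ((s - r) / r) * ENNReal.ofReal (r * φ r) := by
            rw [h22, ENNReal.ofReal_mul (div_nonneg (sub_nonneg.2 hrs) hr.le)]
        _ ≤ ENNReal.ofReal ((s - r) / r) * Φ r := mul_le_mul_right (hlow r hr) _
    calc ENNReal.ofReal (1 / s) * Φ s
        ≤ ENNReal.ofReal (1 / s) * ((1 + ENNReal.ofReal ((s - r) / r)) * Φ r) := by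
          refine mul_le_mul_right ?_ _
          rw [hsplit, add_mul, one_mul]
          exact add_le_add le_rfl h2
      _ = ENNReal.ofReal (1 / s) * ENNReal.ofReal (s / r) * Φ r := by
          rw [mul_assoc]
          congr 2
          rw [← ENNReal.ofReal_one, ← ENNReal.ofReal_add zero_le_one (div_nonneg (sub_nonneg.2 hrs) hr.le)]
          congr 1
          field_simp
          ring
      _ = ENNReal.ofReal (1 / r) * Φ r := by
          rw [← ENNReal.ofReal_mul (by positivity)]
          congr 2
          field_simp
  -- pointwise bound on the supremum
  have hsup : ∀ r : ℝ, 0 < r →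
      (⨆ s ∈ Ioi (0 : ℝ),
        ENNReal.ofReal |min (1 / r) (1 / s) * ∫ t in Ioc 0 s, f t|)
      ≤ ENNReal.ofReal (1 / r) * Φ r := by
    intro r hr
    refine iSup₂_le fun s hs => ?_
    replace hs : (0:ℝ) < s := hs
    have habs : ENNReal.ofReal |∫ t in Ioc (0:ℝ) s, f t| ≤ Φ s := by
      have h1 : |∫ t in Ioc (0:ℝ) s, f t| ≤ ∫ t in Ioc (0:ℝ) s, |f t| := by
        simpa [Real.norm_eq_abs] using
          norm_integral_le_integral_norm (μ := volume.restrict (Ioc (0:ℝ) s)) f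
      have h2 : ENNReal.ofReal (∫ t in Ioc (0:ℝ) s, |f t|)
          = ∫⁻ t in Ioc (0:ℝ) s, ENNReal.ofReal |f t| :=
        ofReal_integral_eq_lintegral_ofReal (hfint s hs).abs
          (ae_of_all _ fun t => abs_nonneg _)
      calc ENNReal.ofReal |∫ t in Ioc (0:ℝ) s, f t|
          ≤ ENNReal.ofReal (∫ t in Ioc (0:ℝ) s, |f t|) := ENNReal.ofReal_le_ofReal h1
        _ = ∫⁻ t in Ioc (0:ℝ) s, ENNReal.ofReal |f t| := h2
        _ ≤ Φ s := hHL s hs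
    have hmin : (0:ℝ) < min (1 / r) (1 / s) := lt_min (by positivity) (by positivity)
    rw [abs_mul, abs_of_pos hmin, ENNReal.ofReal_mul hmin.le]
    rcases le_total s r with h | h
    · have hm : min (1 / r) (1 / s) = 1 / r :=
        min_eq_left (one_div_le_one_div_of_le hs h)
      rw [hm]
      exact mul_le_mul_right (habs.trans (hΦmono h)) _
    · have hm : min (1 / r) (1 / s) = 1 / s :=
        min_eq_right (one_div_le_one_div_of_le hr h)
      rw [hm]
      exact le_trans (mul_le_mul_right habs _) (havg r s hr h)
  -- the Hölder majorant ψ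
  set ψ : ℝ → ℝ≥0∞ := fun t => ENNReal.ofReal (φ t) ^ p * ENNReal.ofReal (t ^ b)
    with hψdef
  have hψmeas : Measurable ψ := by
    apply Measurable.mul
    · exact (ENNReal.measurable_ofReal.comp hφmeas).pow_const _
    · exact ENNReal.measurable_ofReal.comp (measurable_id.pow_const _)
  have hψlt : ∀ t : ℝ, ψ t ≠ ∞ := fun t =>
    ENNReal.mul_ne_top (ENNReal.rpow_ne_top_of_nonneg hp0.le ENNReal.ofReal_ne_top)
      ENNReal.ofReal_ne_top
  -- Hölder's inequality
  have hhold : ∀ r : ℝ, 0 < r →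
      Φ r ≤ (∫⁻ t in Ioc (0:ℝ) r, ψ t) ^ (1/p)
        * ENNReal.ofReal (r ^ u / u) ^ (1/q) := by
    intro r hr
    set F : ℝ → ℝ≥0∞ := fun t => ENNReal.ofReal (φ t * t ^ β) with hFdef
    set G : ℝ → ℝ≥0∞ := fun t => ENNReal.ofReal (t ^ (-β)) with hGdef
    have hFm : AEMeasurable F (volume.restrict (Ioc (0:ℝ) r)) :=
      (ENNReal.measurable_ofReal.comp
        (hφmeas.mul (measurable_id.pow_const _))).aemeasurable
    have hGm : AEMeasurable G (volume.restrict (Ioc (0:ℝ) r)) :=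
      (ENNReal.measurable_ofReal.comp (measurable_id.pow_const _)).aemeasurable
    have key := ENNReal.lintegral_mul_le_Lp_mul_Lq (volume.restrict (Ioc (0:ℝ) r))
      hq hFm hGm
    have hFG : ∫⁻ t in Ioc (0:ℝ) r, (F * G) t = Φ r := by
      refine setLIntegral_congr_fun_ae measurableSet_Ioc (ae_of_all _ fun t ht => ?_)
      have ht0 : (0:ℝ) < t := ht.1
      simp only [Pi.mul_apply, hFdef, hGdef]
      rw [← ENNReal.ofReal_mul (mul_nonneg (hφ0 t ht0) (Real.rpow_nonneg ht0.le _))]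
      congr 1
      rw [mul_assoc, ← Real.rpow_add ht0, add_neg_cancel, Real.rpow_zero, mul_one]
    have hFp : ∫⁻ t in Ioc (0:ℝ) r, F t ^ p = ∫⁻ t in Ioc (0:ℝ) r, ψ t := by
      refine setLIntegral_congr_fun_ae measurableSet_Ioc (ae_of_all _ fun t ht => ?_)
      have ht0 : (0:ℝ) < t := ht.1
      have hβp : β * p = b := by
        rw [hβdef, hbdef]; field_simp
      simp only [hFdef, hψdef]
      rw [ENNReal.ofReal_rpow_of_nonneg
          (mul_nonneg (hφ0 t ht0) (Real.rpow_nonneg ht0.le _)) hp0.le,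
        Real.mul_rpow (hφ0 t ht0) (Real.rpow_nonneg ht0.le _),
        ← Real.rpow_mul ht0.le, hβp,
        ENNReal.ofReal_mul (Real.rpow_nonneg (hφ0 t ht0) _),
        ← ENNReal.ofReal_rpow_of_nonneg (hφ0 t ht0) hp0.le]
    have hGq : ∫⁻ t in Ioc (0:ℝ) r, G t ^ q = ENNReal.ofReal (r ^ u / u) := by
      have hq0 : 0 < q := hq.symm.pos
      have hβq : -β * q = -((N:ℝ) / p) := by
        rw [hβdef, hqdef]
        have hp1' : p - 1 ≠ 0 := sub_ne_zero.2 hp1.ne'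
        field_simp
      have hexp : (-((N:ℝ) / p)) + 1 = u := by
        rw [hudef]; field_simp; ring
      have hgt : (-1:ℝ) < -((N:ℝ) / p) := by
        have : (N:ℝ) / p < 1 := (div_lt_one hp0).2 hp
        linarith
      have hstep : ∀ t ∈ Ioc (0:ℝ) r, G t ^ q = ENNReal.ofReal (t ^ (-((N:ℝ)/p))) := by
        intro t ht
        have ht0 : (0:ℝ) < t := ht.1
        simp only [hGdef]
        rw [ENNReal.ofReal_rpow_of_nonneg (Real.rpow_nonneg ht0.le _) hq0.le,
          ← Real.rpow_mul ht0.le, hβq]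
      rw [setLIntegral_congr_fun_ae measurableSet_Ioc (ae_of_all _ hstep)]
      have hint : IntegrableOn (fun t : ℝ => t ^ (-((N:ℝ)/p))) (Ioc 0 r) := by
        rw [← intervalIntegrable_iff_integrableOn_Ioc_of_le hr.le]
        exact intervalIntegral.intervalIntegrable_rpow' hgt
      have hnn : 0 ≤ᵐ[volume.restrict (Ioc (0:ℝ) r)]
          fun t : ℝ => t ^ (-((N:ℝ)/p)) := by
        filter_upwards [ae_restrict_mem measurableSet_Ioc] with t ht
        exact Real.rpow_nonneg ht.1.le _
      rw [← ofReal_integral_eq_lintegral_ofReal hint hnn]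
      congr 1
      have hIoc : ∫ t in Ioc (0:ℝ) r, t ^ (-((N:ℝ)/p))
          = ∫ t in (0:ℝ)..r, t ^ (-((N:ℝ)/p)) := by
        rw [intervalIntegral.integral_of_le hr.le]
      rw [hIoc, integral_rpow (Or.inl hgt), hexp, Real.zero_rpow hu0.ne', sub_zero]
    calc Φ r = ∫⁻ t in Ioc (0:ℝ) r, (F * G) t := hFG.symm
      _ ≤ (∫⁻ t in Ioc (0:ℝ) r, F t ^ p) ^ (1/p)
          * (∫⁻ t in Ioc (0:ℝ) r, G t ^ q) ^ (1/q) := key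
      _ = (∫⁻ t in Ioc (0:ℝ) r, ψ t) ^ (1/p)
          * ENNReal.ofReal (r ^ u / u) ^ (1/q) := by rw [hFp, hGq]
  -- pointwise bound after Hölder
  have hmain : ∀ r : ℝ, 0 < r →
      ENNReal.ofReal (r ^ ((N : ℝ) - 1)) * (ENNReal.ofReal (1 / r) * Φ r) ^ p
      ≤ ENNReal.ofReal (u ^ (-(p-1)))
        * (ENNReal.ofReal (r ^ (-1 - u)) * ∫⁻ t in Ioc (0:ℝ) r, ψ t) := by
    intro r hr
    have h1 : (ENNReal.ofReal (1 / r) * Φ r) ^ p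
        ≤ ENNReal.ofReal (1 / r) ^ p
          * ((∫⁻ t in Ioc (0:ℝ) r, ψ t) * ENNReal.ofReal (r ^ u / u) ^ (p - 1)) := by
      rw [ENNReal.mul_rpow_of_nonneg _ _ hp0.le]
      refine mul_le_mul_right ?_ _
      calc Φ r ^ p
          ≤ ((∫⁻ t in Ioc (0:ℝ) r, ψ t) ^ (1/p)
              * ENNReal.ofReal (r ^ u / u) ^ (1/q)) ^ p :=
            ENNReal.rpow_le_rpow (hhold r hr) hp0.le
        _ = (∫⁻ t in Ioc (0:ℝ) r, ψ t) * ENNReal.ofReal (r ^ u / u) ^ (p - 1) := by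
            rw [ENNReal.mul_rpow_of_nonneg _ _ hp0.le, ← ENNReal.rpow_mul,
              ← ENNReal.rpow_mul, one_div_mul_cancel hp0.ne', ENNReal.rpow_one]
            congr 2
            rw [hqdef]
            field_simp
    have hreal : r ^ ((N:ℝ) - 1) * ((1/r) ^ p * (r ^ u / u) ^ (p-1))
        = u ^ (-(p-1)) * r ^ (-1 - u) := by
      have e1 : (1/r : ℝ) ^ p = r ^ (-p) := by
        rw [one_div, Real.inv_rpow hr.le, ← Real.rpow_neg hr.le]
      have e2 : (r ^ u / u : ℝ) ^ (p-1) = r ^ (u*(p-1)) * u ^ (-(p-1)) := by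
        rw [Real.div_rpow (Real.rpow_nonneg hr.le u) hu0.le,
          ← Real.rpow_mul hr.le, Real.rpow_neg hu0.le, div_eq_mul_inv]
      have e3 : (N:ℝ) - 1 + (-p + u*(p-1)) = -1 - u := by
        rw [hudef]; field_simp; ring
      rw [e1, e2, show r ^ ((N:ℝ)-1) * (r ^ (-p) * (r ^ (u*(p-1)) * u ^ (-(p-1))))
          = u ^ (-(p-1)) * (r ^ ((N:ℝ)-1) * (r ^ (-p) * r ^ (u*(p-1)))) from by ring,
        ← Real.rpow_add hr, ← Real.rpow_add hr, e3]
    calc ENNReal.ofReal (r ^ ((N : ℝ) - 1)) * (ENNReal.ofReal (1 / r) * Φ r) ^ p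
        ≤ ENNReal.ofReal (r ^ ((N : ℝ) - 1)) * (ENNReal.ofReal (1 / r) ^ p
          * ((∫⁻ t in Ioc (0:ℝ) r, ψ t) * ENNReal.ofReal (r ^ u / u) ^ (p - 1))) :=
          mul_le_mul_right h1 _
      _ = (ENNReal.ofReal (r ^ ((N : ℝ) - 1)) * (ENNReal.ofReal (1 / r) ^ p
            * ENNReal.ofReal (r ^ u / u) ^ (p - 1))) * ∫⁻ t in Ioc (0:ℝ) r, ψ t := by
          ring
      _ = ENNReal.ofReal (u ^ (-(p-1))) * ENNReal.ofReal (r ^ (-1 - u))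
            * ∫⁻ t in Ioc (0:ℝ) r, ψ t := by
          congr 1
          rw [ENNReal.ofReal_rpow_of_nonneg (by positivity) hp0.le,
            ENNReal.ofReal_rpow_of_nonneg (by positivity) (by linarith : (0:ℝ) ≤ p - 1),
            ← ENNReal.ofReal_mul (by positivity),
            ← ENNReal.ofReal_mul (by positivity),
            ← ENNReal.ofReal_mul (by positivity), hreal]
      _ = ENNReal.ofReal (u ^ (-(p-1)))
          * (ENNReal.ofReal (r ^ (-1 - u)) * ∫⁻ t in Ioc (0:ℝ) r, ψ t) := by
          rw [mul_assoc]
  -- Tonelli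
  have hFub : (∫⁻ r in Ioi (0:ℝ),
        ENNReal.ofReal (r ^ (-1 - u)) * ∫⁻ t in Ioc (0:ℝ) r, ψ t)
      = ∫⁻ t in Ioi (0:ℝ), ψ t * ENNReal.ofReal (t ^ (-u) / u) := by
    set S : Set (ℝ × ℝ) := {x | x.2 ≤ x.1} with hSdef
    have hSm : MeasurableSet S := measurableSet_le measurable_snd measurable_fst
    set g : ℝ × ℝ → ℝ≥0∞ :=
      fun x => ENNReal.ofReal (x.1 ^ (-1 - u)) * ψ x.2 with hgdef
    have hgm : Measurable (S.indicator g) := by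
      refine Measurable.indicator ?_ hSm
      exact (ENNReal.measurable_ofReal.comp
        (measurable_fst.pow_const _)).mul (hψmeas.comp measurable_snd)
    have h1 : ∀ r ∈ Ioi (0:ℝ),
        ENNReal.ofReal (r ^ (-1 - u)) * ∫⁻ t in Ioc (0:ℝ) r, ψ t
        = ∫⁻ t in Ioi (0:ℝ), S.indicator g (r, t) := by
      intro r _
      have hind : (fun t => S.indicator g (r, t))
          = (Iic r).indicator (fun t => ENNReal.ofReal (r ^ (-1 - u)) * ψ t) := by
        ext t
        by_cases h : t ≤ r
        · rw [indicator_of_mem (show (r,t) ∈ S from h),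
            indicator_of_mem (show t ∈ Iic r from h)]
        · rw [indicator_of_notMem (show (r,t) ∉ S from h),
            indicator_of_notMem (show t ∉ Iic r from h)]
      rw [hind, lintegral_indicator measurableSet_Iic,
        Measure.restrict_restrict measurableSet_Iic]
      have hset : Iic r ∩ Ioi (0:ℝ) = Ioc 0 r := by
        ext x
        simp only [mem_inter_iff, mem_Iic, mem_Ioi, mem_Ioc]
        tauto
      rw [hset, lintegral_const_mul' _ _ ENNReal.ofReal_ne_top]
    have h2 : ∀ t ∈ Ioi (0:ℝ),
        (∫⁻ r in Ioi (0:ℝ), S.indicator g (r, t))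
        = ψ t * ENNReal.ofReal (t ^ (-u) / u) := by
      intro t ht
      replace ht : (0:ℝ) < t := ht
      have hind : (fun r => S.indicator g (r, t))
          = (Ici t).indicator (fun r => ENNReal.ofReal (r ^ (-1 - u)) * ψ t) := by
        ext r
        by_cases h : t ≤ r
        · rw [indicator_of_mem (show (r,t) ∈ S from h),
            indicator_of_mem (show r ∈ Ici t from h)]
        · rw [indicator_of_notMem (show (r,t) ∉ S from h),
            indicator_of_notMem (show r ∉ Ici t from h)]
      rw [hind, lintegral_indicator measurableSet_Ici,
        Measure.restrict_restrict measurableSet_Ici]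
      have hset : Ici t ∩ Ioi (0:ℝ) = Ici t :=
        inter_eq_left.2 (fun x hx => lt_of_lt_of_le ht hx)
      rw [hset, lintegral_mul_const' _ _ (hψlt t),
        ← setLIntegral_congr (Ioi_ae_eq_Ici (a := t))]
      have hlt : (-1 - u : ℝ) < -1 := by linarith
      have hint : IntegrableOn (fun r : ℝ => r ^ (-1 - u)) (Ioi t) :=
        integrableOn_Ioi_rpow_of_lt hlt ht
      have hnn : 0 ≤ᵐ[volume.restrict (Ioi t)] fun r : ℝ => r ^ (-1 - u) := by
        filter_upwards [ae_restrict_mem measurableSet_Ioi] with x hx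
        exact Real.rpow_nonneg (le_of_lt (lt_trans ht hx)) _
      rw [← ofReal_integral_eq_lintegral_ofReal hint hnn,
        integral_Ioi_rpow_of_lt hlt ht]
      have hval : -t ^ (-1 - u + 1) / (-1 - u + 1) = t ^ (-u) / u := by
        rw [show (-1 - u + 1 : ℝ) = -u from by ring]
        rw [div_eq_div_iff (by simpa using hu0.ne') hu0.ne']
        ring
      rw [hval, mul_comm]
    calc (∫⁻ r in Ioi (0:ℝ),
          ENNReal.ofReal (r ^ (-1 - u)) * ∫⁻ t in Ioc (0:ℝ) r, ψ t)
        = ∫⁻ r in Ioi (0:ℝ), ∫⁻ t in Ioi (0:ℝ), S.indicator g (r, t) :=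
          setLIntegral_congr_fun_ae measurableSet_Ioi (ae_of_all _ h1)
      _ = ∫⁻ t in Ioi (0:ℝ), ∫⁻ r in Ioi (0:ℝ), S.indicator g (r, t) := by
          refine lintegral_lintegral_swap ?_
          exact (hgm.comp measurable_id).aemeasurable
      _ = ∫⁻ t in Ioi (0:ℝ), ψ t * ENNReal.ofReal (t ^ (-u) / u) :=
          setLIntegral_congr_fun_ae measurableSet_Ioi (ae_of_all _ h2)
  -- rewrite last integral
  have hlast : (∫⁻ t in Ioi (0:ℝ), ψ t * ENNReal.ofReal (t ^ (-u) / u))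
      = ENNReal.ofReal (1/u) * ∫⁻ t in Ioi (0:ℝ),
          ENNReal.ofReal (t ^ ((N:ℝ) - 1)) * ENNReal.ofReal (φ t) ^ p := by
    rw [← lintegral_const_mul' _ _ ENNReal.ofReal_ne_top]
    refine setLIntegral_congr_fun_ae measurableSet_Ioi (ae_of_all _ fun t ht => ?_)
    replace ht : (0:ℝ) < t := ht
    have hbu : b + -u = (N:ℝ) - 1 := by
      rw [hbdef, hudef]; field_simp; ring
    simp only [hψdef]
    rw [div_eq_mul_one_div, ENNReal.ofReal_mul (Real.rpow_nonneg ht.le _)]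
    calc ENNReal.ofReal (φ t) ^ p * ENNReal.ofReal (t ^ b)
          * (ENNReal.ofReal (t ^ (-u)) * ENNReal.ofReal (1/u))
        = ENNReal.ofReal (1/u) * ((ENNReal.ofReal (t ^ b) * ENNReal.ofReal (t ^ (-u)))
            * ENNReal.ofReal (φ t) ^ p) := by ring
      _ = ENNReal.ofReal (1/u)
          * (ENNReal.ofReal (t ^ ((N:ℝ) - 1)) * ENNReal.ofReal (φ t) ^ p) := by
          rw [← ENNReal.ofReal_mul (Real.rpow_nonneg ht.le _), ← Real.rpow_add ht, hbu]
  -- constant identity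
  have hconst : u ^ (-(p-1)) * (1/u) = (p / (p - (N:ℝ))) ^ p := by
    have hc0 : (0:ℝ) < p / (p - N) := by positivity
    have h1 : u⁻¹ = p / (p - (N:ℝ)) := by rw [hudef, inv_div]
    rw [one_div, Real.rpow_neg hu0.le, ← Real.inv_rpow hu0.le, h1,
      ← Real.rpow_add_one hc0.ne']
    norm_num
  -- final assembly
  calc ∫⁻ r in Ioi (0 : ℝ), ENNReal.ofReal (r ^ ((N : ℝ) - 1)) *
        (⨆ s ∈ Ioi (0 : ℝ),
          ENNReal.ofReal |min (1 / r) (1 / s) * ∫ t in Ioc 0 s, f t|) ^ p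
      ≤ ∫⁻ r in Ioi (0:ℝ), ENNReal.ofReal (u ^ (-(p-1)))
          * (ENNReal.ofReal (r ^ (-1 - u)) * ∫⁻ t in Ioc (0:ℝ) r, ψ t) := by
        refine lintegral_mono_ae ?_
        filter_upwards [ae_restrict_mem measurableSet_Ioi] with r hr
        exact le_trans
          (mul_le_mul_right (ENNReal.rpow_le_rpow (hsup r hr) hp0.le) _) (hmain r hr)
    _ = ENNReal.ofReal (u ^ (-(p-1))) * ∫⁻ r in Ioi (0:ℝ),
          ENNReal.ofReal (r ^ (-1 - u)) * ∫⁻ t in Ioc (0:ℝ) r, ψ t :=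
        lintegral_const_mul' _ _ ENNReal.ofReal_ne_top
    _ = ENNReal.ofReal (u ^ (-(p-1))) * (ENNReal.ofReal (1/u)
          * ∫⁻ t in Ioi (0:ℝ),
              ENNReal.ofReal (t ^ ((N:ℝ) - 1)) * ENNReal.ofReal (φ t) ^ p) := by
        rw [hFub, hlast]
    _ = ENNReal.ofReal ((p / (p - N)) ^ p) *
        ∫⁻ r in Ioi (0 : ℝ), ENNReal.ofReal (r ^ ((N : ℝ) - 1)) *
          ENNReal.ofReal (φ r) ^ p := by
        rw [← mul_assoc, ← ENNReal.ofReal_mul (by positivity), hconst]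
end

section
/- Let N ≥ 1 be an integer and 1 < p < ∞. Let u : ℝ^N → ℝ be continuously differentiable, let f : ℝ^N → [0,∞) be a nonnegative measurable radial function, and define the radialisation ũ(x) = ( (1/ω_N) ∫_{S^{N−1}} |u(‖x‖σ)|^p dσ )^{1/p} for x ≠ 0. Assume ũ is differentiable on ℝ^N \ {0}. Then ∫_{ℝ^N} f(x) · | (x/‖x‖) · ∇ũ(x) |^p dx ≤ ∫_{ℝ^N} f(x) · | (x/‖x‖) · ∇u(x) |^p dx. -/
open MeasureTheory Metric Set
open scoped ENNReal RealInnerProductSpace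

/-- The surface measure on the unit sphere `S^{N-1} ⊆ ℝ^N`. -/
noncomputable def sphereMeasure (N : ℕ) :
    Measure (sphere (0 : EuclideanSpace ℝ (Fin N)) 1) :=
  (volume : Measure (EuclideanSpace ℝ (Fin N))).toSphere

/-- `ω_N`, the total surface area of the unit sphere `S^{N-1} ⊆ ℝ^N`. -/
noncomputable def sphereArea (N : ℕ) : ℝ := (sphereMeasure N univ).toReal

open Filter
open scoped Topology

lemma inner_gradient_eq {F : Type*} [NormedAddCommGroup F] [InnerProductSpace ℝ F]
    [CompleteSpace F] (f : F → ℝ) (x y : F) :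
    ⟪y, gradient f x⟫ = fderiv ℝ f x y := by
  rw [real_inner_comm, gradient, ← InnerProductSpace.toDual_apply_apply,
    LinearIsometryEquiv.apply_symm_apply]

lemma aux_hasDerivAt_radial {F : Type*} [NormedAddCommGroup F] [InnerProductSpace ℝ F]
    [CompleteSpace F] (util : F → ℝ) (g : ℝ → ℝ)
    (hg : ∀ y : F, y ≠ 0 → util y = g ‖y‖)
    {x : F} (hx : x ≠ 0) (hdiff : DifferentiableAt ℝ util x) :
    HasDerivAt g ⟪‖x‖⁻¹ • x, gradient util x⟫ ‖x‖ := by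
  set v : F := ‖x‖⁻¹ • x with hv
  have hxn : (0:ℝ) < ‖x‖ := norm_pos_iff.2 hx
  have hvnorm : ‖v‖ = 1 := by
    rw [hv, norm_smul, norm_inv, norm_norm, inv_mul_cancel₀ hxn.ne']
  have hφ : ∀ t : ℝ, HasDerivAt (fun t : ℝ => t • v) v t := fun t => by
    simpa using (hasDerivAt_id t).smul_const v
  have hφx : ‖x‖ • v = x := by rw [hv, smul_inv_smul₀ hxn.ne']
  have hcomp : HasDerivAt (fun t : ℝ => util (t • v)) (fderiv ℝ util x v) ‖x‖ := by
    have hd' : HasFDerivAt util (fderiv ℝ util x) (‖x‖ • v) := by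
      rw [hφx]; exact hdiff.hasFDerivAt
    exact hd'.comp_hasDerivAt ‖x‖ (hφ ‖x‖)
  have heq : (fun t : ℝ => util (t • v)) =ᶠ[nhds ‖x‖] g := by
    filter_upwards [Ioi_mem_nhds hxn] with t ht
    have htv : t • v ≠ 0 := smul_ne_zero (ne_of_gt ht) (by simp [hvnorm, ← norm_pos_iff])
    rw [hg _ htv, norm_smul, hvnorm, mul_one, Real.norm_eq_abs, abs_of_pos ht]
  have := hcomp.congr_of_eventuallyEq heq.symm
  have hval : fderiv ℝ util x v = ⟪v, gradient util x⟫ := (inner_gradient_eq util x v).symm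
  rwa [hval] at this

lemma aux_mvt {E : Type*} [NormedAddCommGroup E] [NormedSpace ℝ E]
    (u : E → ℝ) (hu : ContDiff ℝ 1 u) [ProperSpace E]
    (r : ℝ) {ε : ℝ} (hε : 0 < ε) :
    ∃ δ > 0, ∀ t : ℝ, |t - r| < δ → ∀ σ : sphere (0 : E) 1,
      |u (t • (σ : E)) - u (r • (σ : E))| ≤
        |t - r| * (|fderiv ℝ u (r • (σ : E)) (σ : E)| + ε) := by
  have hψ : Continuous (fderiv ℝ u) := hu.continuous_fderiv one_ne_zero
  have hUC := (isCompact_closedBall (0 : E) (|r| + 1)).uniformContinuousOn_of_continuous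
    hψ.continuousOn
  rw [Metric.uniformContinuousOn_iff] at hUC
  obtain ⟨δ, hδ, H⟩ := hUC ε hε
  refine ⟨min δ 1, lt_min hδ one_pos, fun t ht σ => ?_⟩
  have hσ : ‖(σ : E)‖ = 1 := mem_sphere_zero_iff_norm.1 σ.2
  set a : ℝ := fderiv ℝ u (r • (σ : E)) (σ : E) with ha
  have htr1 : |t - r| < 1 := lt_of_lt_of_le ht (min_le_right _ _)
  have htrδ : |t - r| < δ := lt_of_lt_of_le ht (min_le_left _ _)
  -- key facts about s ∈ uIcc r t
  have hmem : ∀ s ∈ uIcc r t, |s - r| ≤ |t - r| := by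
    intro s hs
    rcases mem_uIcc.1 hs with h | h
    · rw [abs_sub_le_iff]; constructor <;> [skip; skip] <;>
        · have := le_abs_self (t - r); have := neg_abs_le (t - r); linarith [h.1, h.2]
    · rw [abs_sub_le_iff]; constructor <;>
        · have := le_abs_self (t - r); have := neg_abs_le (t - r); linarith [h.1, h.2]
  have hball : ∀ s ∈ uIcc r t, s • (σ : E) ∈ closedBall (0 : E) (|r| + 1) := by
    intro s hs
    rw [mem_closedBall_zero_iff, norm_smul, hσ, mul_one, Real.norm_eq_abs]
    have h1 := hmem s hs
    have : |s| ≤ |r| + |s - r| := by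
      calc |s| = |r + (s - r)| := by ring_nf
      _ ≤ |r| + |s - r| := abs_add_le _ _
    linarith
  have hbound : ∀ s ∈ uIcc r t, ‖fderiv ℝ u (s • (σ : E)) (σ : E) - a‖ ≤ ε := by
    intro s hs
    have hd : dist (s • (σ : E)) (r • (σ : E)) < δ := by
      rw [dist_eq_norm, ← sub_smul, norm_smul, hσ, mul_one, Real.norm_eq_abs]
      exact lt_of_le_of_lt (hmem s hs) htrδ
    have := H _ (hball s hs) _ (hball r (left_mem_uIcc)) hd
    rw [dist_eq_norm] at this
    calc ‖fderiv ℝ u (s • (σ : E)) (σ : E) - a‖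
        = ‖(fderiv ℝ u (s • (σ : E)) - fderiv ℝ u (r • (σ : E))) (σ : E)‖ := by
          rw [ContinuousLinearMap.sub_apply]
      _ ≤ ‖fderiv ℝ u (s • (σ : E)) - fderiv ℝ u (r • (σ : E))‖ * ‖(σ : E)‖ :=
          ContinuousLinearMap.le_opNorm _ _
      _ ≤ ε := by rw [hσ, mul_one]; exact this.le
  -- the auxiliary function
  set h : ℝ → ℝ := fun s => u (s • (σ : E)) - s * a with hh
  have hderiv : ∀ s ∈ uIcc r t,
      HasDerivWithinAt h (fderiv ℝ u (s • (σ : E)) (σ : E) - a) (uIcc r t) s := by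
    intro s _
    have h1 : HasDerivAt (fun s : ℝ => s • (σ : E)) (σ : E) s := by
      simpa using (hasDerivAt_id s).smul_const (σ : E)
    have h2 : HasDerivAt (fun s : ℝ => u (s • (σ : E)))
        (fderiv ℝ u (s • (σ : E)) (σ : E)) s :=
      ((hu.differentiable one_ne_zero) (s • (σ : E))).hasFDerivAt.comp_hasDerivAt s h1
    have h3 : HasDerivAt (fun s : ℝ => s * a) a s := by
      simpa using (hasDerivAt_id s).mul_const a
    exact (h2.sub h3).hasDerivWithinAt
  have key : ‖h t - h r‖ ≤ ε * ‖t - r‖ :=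
    (convex_uIcc r t).norm_image_sub_le_of_norm_hasDerivWithin_le hderiv hbound
      left_mem_uIcc right_mem_uIcc
  rw [Real.norm_eq_abs, Real.norm_eq_abs] at key
  have hexp : u (t • (σ : E)) - u (r • (σ : E)) = (h t - h r) + (t - r) * a := by
    simp only [hh]; ring
  calc |u (t • (σ : E)) - u (r • (σ : E))| = |(h t - h r) + (t - r) * a| := by rw [hexp]
    _ ≤ |h t - h r| + |(t - r) * a| := abs_add_le _ _
    _ ≤ ε * |t - r| + |t - r| * |a| := by
        rw [abs_mul]; exact add_le_add key le_rfl
    _ = |t - r| * (|a| + ε) := by ring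

lemma aux_core {E : Type*} [NormedAddCommGroup E] [NormedSpace ℝ E] [ProperSpace E]
    [MeasurableSpace E] [BorelSpace E] {p : ℝ} (hp : 1 < p)
    (u : E → ℝ) (hu : ContDiff ℝ 1 u)
    (ν : Measure (sphere (0 : E) 1)) [IsFiniteMeasure ν]
    (hν0 : ν univ ≠ 0)
    (g : ℝ → ℝ)
    (hg : ∀ t : ℝ, g t = ((1 / (ν univ).toReal) *
      ∫ σ : sphere (0 : E) 1, |u (t • (σ : E))| ^ p ∂ν) ^ (1 / p))
    {r d : ℝ} (hd : HasDerivAt g d r) :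
    ν univ * ENNReal.ofReal (|d| ^ p)
      ≤ ∫⁻ σ : sphere (0 : E) 1,
          ENNReal.ofReal (|fderiv ℝ u (r • (σ : E)) (σ : E)| ^ p) ∂ν := by
  have hp0 : (0:ℝ) ≤ p := by linarith
  have hppos : (0:ℝ) < p := by linarith
  have hpne : p ≠ 0 := hppos.ne'
  have hp0' : (0:ℝ) ≤ 1 / p := by positivity
  set ω : ℝ := (ν univ).toReal with hω
  have hνfin : ν univ ≠ ∞ := measure_ne_top _ _
  have hωpos : 0 < ω := ENNReal.toReal_pos hν0 hνfin
  have hucont : Continuous u := hu.continuous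
  have hψ : Continuous (fderiv ℝ u) := hu.continuous_fderiv one_ne_zero
  -- continuity facts
  have ucont : ∀ t : ℝ, Continuous fun σ : sphere (0 : E) 1 => u (t • (σ : E)) := by
    intro t; fun_prop
  have acont : Continuous fun σ : sphere (0 : E) 1 => fderiv ℝ u (r • (σ : E)) (σ : E) := by
    exact Continuous.clm_apply (by fun_prop) continuous_subtype_val
  -- finiteness of the p-lintegral of any continuous function
  have lintfin : ∀ (φ : sphere (0 : E) 1 → ℝ), Continuous φ →
      (∫⁻ σ : sphere (0 : E) 1, ENNReal.ofReal |φ σ| ^ p ∂ν) ≠ ∞ := by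
    intro φ hφ
    obtain ⟨C, hC⟩ := isCompact_univ.exists_bound_of_continuousOn hφ.continuousOn
    have hb : ∀ σ : sphere (0 : E) 1, ENNReal.ofReal |φ σ| ^ p ≤ ENNReal.ofReal C ^ p := fun σ =>
      ENNReal.rpow_le_rpow (ENNReal.ofReal_le_ofReal
        ((Real.norm_eq_abs _ ▸ hC σ (mem_univ σ)))) hp0
    refine ne_top_of_le_ne_top ?_ (lintegral_mono hb)
    rw [lintegral_const]
    exact ENNReal.mul_ne_top (ENNReal.rpow_ne_top_of_nonneg hp0 ENNReal.ofReal_ne_top) hνfin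
  -- lintegral quantities
  set J : ℝ → ℝ≥0∞ :=
    fun t => ∫⁻ σ : sphere (0 : E) 1, ENNReal.ofReal |u (t • (σ : E))| ^ p ∂ν with hJdef
  set K : ℝ≥0∞ :=
    ∫⁻ σ : sphere (0 : E) 1, ENNReal.ofReal |fderiv ℝ u (r • (σ : E)) (σ : E)| ^ p ∂ν with hKdef
  have Jfin : ∀ t, J t ≠ ∞ := fun t => lintfin _ (ucont t)
  have Kfin : K ≠ ∞ := lintfin _ acont
  -- Bochner = lintegral
  have hJ : ∀ t : ℝ, ∫ σ : sphere (0 : E) 1, |u (t • (σ : E))| ^ p ∂ν = (J t).toReal := by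
    intro t
    have hcont : Continuous fun σ : sphere (0 : E) 1 => |u (t • (σ : E))| ^ p :=
      (ucont t).abs.rpow_const (fun σ => Or.inr hp0)
    obtain ⟨C, hC⟩ := isCompact_univ.exists_bound_of_continuousOn hcont.continuousOn
    have hint : Integrable (fun σ : sphere (0 : E) 1 => |u (t • (σ : E))| ^ p) ν :=
      ⟨hcont.aestronglyMeasurable,
        HasFiniteIntegral.of_bounded (C := C) (ae_of_all _ fun σ => hC σ (mem_univ σ))⟩
    have hnn : 0 ≤ᵐ[ν] fun σ : sphere (0 : E) 1 => |u (t • (σ : E))| ^ p :=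
      ae_of_all _ fun σ => Real.rpow_nonneg (abs_nonneg _) _
    have h1 := ofReal_integral_eq_lintegral_ofReal hint hnn
    have h2 : J t = ENNReal.ofReal (∫ σ : sphere (0 : E) 1, |u (t • (σ : E))| ^ p ∂ν) := by
      rw [h1, hJdef]
      exact lintegral_congr fun σ => ENNReal.ofReal_rpow_of_nonneg (abs_nonneg _) hp0
    rw [h2, ENNReal.toReal_ofReal (integral_nonneg fun σ => Real.rpow_nonneg (abs_nonneg _) _)]
  -- formula for ofReal (g t)
  have gnonneg : ∀ t, 0 ≤ g t := fun t => by
    rw [hg t]; positivity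
  have hg' : ∀ t : ℝ, ENNReal.ofReal (g t)
      = ENNReal.ofReal (1 / ω) ^ (1 / p) * J t ^ (1 / p) := by
    intro t
    rw [hg t, hJ t, ← ENNReal.ofReal_rpow_of_nonneg (by positivity) hp0',
      ENNReal.ofReal_mul (by positivity), ENNReal.ofReal_toReal (Jfin t),
      ENNReal.mul_rpow_of_nonneg _ _ hp0']
  -- Minkowski: distance between slices
  set Dst : ℝ → ℝ → ℝ≥0∞ := fun s t =>
    (∫⁻ σ : sphere (0 : E) 1,
      ENNReal.ofReal |u (t • (σ : E)) - u (s • (σ : E))| ^ p ∂ν) ^ (1/p) with hDdef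
  have hmink : ∀ s t : ℝ, J t ^ (1/p) ≤ J s ^ (1/p) + Dst s t := by
    intro s t
    have hpt : ∀ σ : sphere (0 : E) 1, ENNReal.ofReal |u (t • (σ : E))|
        ≤ ((fun σ : sphere (0 : E) 1 => ENNReal.ofReal |u (s • (σ : E))|) +
           (fun σ : sphere (0 : E) 1 =>
             ENNReal.ofReal |u (t • (σ : E)) - u (s • (σ : E))|)) σ := by
      intro σ
      have h0 := abs_sub_abs_le_abs_sub (u (t • (σ : E))) (u (s • (σ : E)))
      refine le_trans (ENNReal.ofReal_le_ofReal (by linarith)) ENNReal.ofReal_add_le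
    have h1 : J t ≤ ∫⁻ σ : sphere (0 : E) 1,
        ((fun σ : sphere (0 : E) 1 => ENNReal.ofReal |u (s • (σ : E))|) +
         (fun σ : sphere (0 : E) 1 =>
           ENNReal.ofReal |u (t • (σ : E)) - u (s • (σ : E))|)) σ ^ p ∂ν :=
      lintegral_mono fun σ => ENNReal.rpow_le_rpow (hpt σ) hp0
    have h2 := ENNReal.lintegral_Lp_add_le (μ := ν)
      (f := fun σ : sphere (0 : E) 1 => ENNReal.ofReal |u (s • (σ : E))|)
      (g := fun σ : sphere (0 : E) 1 => ENNReal.ofReal |u (t • (σ : E)) - u (s • (σ : E))|)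
      (((ucont s).abs.measurable.ennreal_ofReal).aemeasurable)
      ((((ucont t).sub (ucont s)).abs.measurable.ennreal_ofReal).aemeasurable) hp.le
    exact le_trans (ENNReal.rpow_le_rpow h1 hp0') h2
  have hDsymm : ∀ s t : ℝ, Dst s t = Dst t s := by
    intro s t
    simp only [hDdef]
    congr 1
    exact lintegral_congr fun σ => by rw [abs_sub_comm]
  -- useful rpow cancellation
  have hcancel : ∀ c : ℝ≥0∞, (c ^ p) ^ (1/p) = c := by
    intro c
    rw [← ENNReal.rpow_mul, mul_one_div_cancel hpne, ENNReal.rpow_one]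
  set Kp : ℝ := (K ^ (1/p)).toReal with hKp
  set Sν : ℝ := ((ν univ) ^ (1/p)).toReal with hSν
  have hKrfin : K ^ (1/p) ≠ ∞ := ENNReal.rpow_ne_top_of_nonneg hp0' Kfin
  have hνrfin : (ν univ) ^ (1/p) ≠ ∞ := ENNReal.rpow_ne_top_of_nonneg hp0' hνfin
  have hc0 : (0:ℝ) ≤ (1/ω) ^ (1/p) := Real.rpow_nonneg (by positivity) _
  -- the key ε-estimate
  have keyeps : ∀ ε : ℝ, 0 < ε → |d| ≤ (1/ω) ^ (1/p) * (Kp + ε * Sν) := by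
    intro ε hε
    obtain ⟨δ, hδ, HM⟩ := aux_mvt u hu r hε
    set C : ℝ := (1/ω) ^ (1/p) * (Kp + ε * Sν) with hC
    have evb : ∀ t : ℝ, |t - r| < δ → |g t - g r| ≤ |t - r| * C := by
      intro t ht
      set B : ℝ≥0∞ := ENNReal.ofReal |t - r| *
        (K ^ (1/p) + ENNReal.ofReal ε * (ν univ) ^ (1/p)) with hB
      have hBfin : B ≠ ∞ := by
        apply ENNReal.mul_ne_top ENNReal.ofReal_ne_top
        rw [ENNReal.add_ne_top]
        exact ⟨hKrfin, ENNReal.mul_ne_top ENNReal.ofReal_ne_top hνrfin⟩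
      have hDB : Dst r t ≤ B := by
        have hpt : ∀ σ : sphere (0 : E) 1,
            ENNReal.ofReal |u (t • (σ : E)) - u (r • (σ : E))| ^ p
            ≤ ENNReal.ofReal |t - r| ^ p *
              ((fun σ : sphere (0 : E) 1 =>
                  ENNReal.ofReal |fderiv ℝ u (r • (σ : E)) (σ : E)|) +
               (fun _ : sphere (0 : E) 1 => ENNReal.ofReal ε)) σ ^ p := by
          intro σ
          rw [← ENNReal.mul_rpow_of_nonneg _ _ hp0]
          refine ENNReal.rpow_le_rpow ?_ hp0
          calc ENNReal.ofReal |u (t • (σ : E)) - u (r • (σ : E))|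
              ≤ ENNReal.ofReal (|t - r| * (|fderiv ℝ u (r • (σ : E)) (σ : E)| + ε)) :=
                ENNReal.ofReal_le_ofReal (HM t ht σ)
            _ = ENNReal.ofReal |t - r| *
                (ENNReal.ofReal |fderiv ℝ u (r • (σ : E)) (σ : E)| + ENNReal.ofReal ε) := by
                rw [ENNReal.ofReal_mul (abs_nonneg _), ENNReal.ofReal_add (abs_nonneg _) hε.le]
        have hconstp : (∫⁻ _σ : sphere (0 : E) 1, ENNReal.ofReal ε ^ p ∂ν) ^ (1/p)
            = ENNReal.ofReal ε * (ν univ) ^ (1/p) := by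
          rw [lintegral_const, ENNReal.mul_rpow_of_nonneg _ _ hp0', hcancel]
        have hmink2 := ENNReal.lintegral_Lp_add_le (μ := ν)
          (f := fun σ : sphere (0 : E) 1 =>
            ENNReal.ofReal |fderiv ℝ u (r • (σ : E)) (σ : E)|)
          (g := fun _ : sphere (0 : E) 1 => ENNReal.ofReal ε)
          ((acont.abs.measurable.ennreal_ofReal).aemeasurable) aemeasurable_const hp.le
        calc Dst r t
            ≤ (∫⁻ σ : sphere (0 : E) 1, ENNReal.ofReal |t - r| ^ p *
                ((fun σ : sphere (0 : E) 1 =>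
                    ENNReal.ofReal |fderiv ℝ u (r • (σ : E)) (σ : E)|) +
                 (fun _ : sphere (0 : E) 1 => ENNReal.ofReal ε)) σ ^ p ∂ν) ^ (1/p) :=
              ENNReal.rpow_le_rpow (lintegral_mono hpt) hp0'
          _ = ENNReal.ofReal |t - r| * (∫⁻ σ : sphere (0 : E) 1,
                ((fun σ : sphere (0 : E) 1 =>
                    ENNReal.ofReal |fderiv ℝ u (r • (σ : E)) (σ : E)|) +
                 (fun _ : sphere (0 : E) 1 => ENNReal.ofReal ε)) σ ^ p ∂ν) ^ (1/p) := by
              rw [lintegral_const_mul' _ _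
                  (ENNReal.rpow_ne_top_of_nonneg hp0 ENNReal.ofReal_ne_top),
                ENNReal.mul_rpow_of_nonneg _ _ hp0', hcancel]
          _ ≤ B := by
              rw [hB]
              refine mul_le_mul_right (le_trans hmink2 ?_) _
              rw [hconstp]
      -- transfer to the real inequality
      set c0' : ℝ≥0∞ := ENNReal.ofReal (1/ω) ^ (1/p) with hc0'
      have hc0fin : c0' ≠ ∞ := ENNReal.rpow_ne_top_of_nonneg hp0' ENNReal.ofReal_ne_top
      have hXfin : c0' * B ≠ ∞ := ENNReal.mul_ne_top hc0fin hBfin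
      have hdir : ∀ s t' : ℝ, Dst s t' ≤ B → g t' ≤ g s + (c0' * B).toReal := by
        intro s t' hst
        have h1 : ENNReal.ofReal (g t') ≤ ENNReal.ofReal (g s) + c0' * B := by
          rw [hg' t', hg' s]
          calc c0' * J t' ^ (1/p) ≤ c0' * (J s ^ (1/p) + Dst s t') :=
                mul_le_mul_right (hmink s t') _
            _ ≤ c0' * (J s ^ (1/p) + B) :=
                mul_le_mul_right (add_le_add_right hst _) _
            _ = c0' * J s ^ (1/p) + c0' * B := by rw [mul_add]
        have h2 := ENNReal.toReal_mono
          (ENNReal.add_ne_top.2 ⟨ENNReal.ofReal_ne_top, hXfin⟩) h1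
        rwa [ENNReal.toReal_add ENNReal.ofReal_ne_top hXfin,
          ENNReal.toReal_ofReal (gnonneg t'), ENNReal.toReal_ofReal (gnonneg s)] at h2
      have hXval : (c0' * B).toReal = |t - r| * C := by
        rw [ENNReal.toReal_mul, hc0', ENNReal.ofReal_rpow_of_nonneg (by positivity) hp0',
          ENNReal.toReal_ofReal (Real.rpow_nonneg (by positivity) _), hB,
          ENNReal.toReal_mul, ENNReal.toReal_ofReal (abs_nonneg _),
          ENNReal.toReal_add hKrfin (ENNReal.mul_ne_top ENNReal.ofReal_ne_top hνrfin),
          ENNReal.toReal_mul, ENNReal.toReal_ofReal hε.le, hC, ← hKp, ← hSν]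
        ring
      have h1 := hdir r t hDB
      have h2 := hdir t r (by rw [hDsymm t r]; exact hDB)
      rw [hXval] at h1 h2
      rw [abs_sub_le_iff]
      constructor <;> linarith
    -- pass to the limit via the slope
    rw [hasDerivAt_iff_tendsto_slope] at hd
    have htends : Tendsto (fun t => |slope g r t|) (𝓝[≠] r) (𝓝 |d|) :=
      hd.abs
    have hev : ∀ᶠ t in 𝓝[≠] r, |slope g r t| ≤ C := by
      have h0 : ∀ᶠ t in 𝓝 r, |t - r| < δ := by
        filter_upwards [Metric.ball_mem_nhds r hδ] with t ht
        simpa [Real.dist_eq] using ht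
      filter_upwards [h0.filter_mono nhdsWithin_le_nhds, self_mem_nhdsWithin] with t ht htne
      have htr : t - r ≠ 0 := sub_ne_zero.2 htne
      have h1 := evb t ht
      have habs : |slope g r t| = |g t - g r| / |t - r| := by
        rw [slope_def_field, abs_div]
      rw [habs, div_le_iff₀ (abs_pos.2 htr)]
      linarith [h1]
    exact le_of_tendsto htends hev
  -- let ε → 0
  have hSν0 : 0 ≤ Sν := ENNReal.toReal_nonneg
  have hKp0 : 0 ≤ Kp := ENNReal.toReal_nonneg
  have hfinal : |d| ≤ (1/ω) ^ (1/p) * Kp := by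
    refine le_of_forall_pos_le_add fun ε' hε' => ?_
    set c := (1/ω) ^ (1/p) * Sν with hc
    have hcnn : 0 ≤ c := mul_nonneg hc0 hSν0
    have hεpos : 0 < ε' / (c + 1) := by positivity
    have h1 := keyeps (ε' / (c + 1)) hεpos
    have h2 : (1/ω) ^ (1/p) * (Kp + ε' / (c + 1) * Sν)
        = (1/ω) ^ (1/p) * Kp + (ε' / (c + 1)) * c := by rw [hc]; ring
    have h3 : (ε' / (c + 1)) * c ≤ ε' := by
      rw [div_mul_eq_mul_div, div_le_iff₀ (by linarith)]
      nlinarith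
    linarith
  -- conclude
  have habs : |d| ^ p ≤ (1/ω) * K.toReal := by
    calc |d| ^ p ≤ ((1/ω) ^ (1/p) * Kp) ^ p :=
          Real.rpow_le_rpow (abs_nonneg d) hfinal hp0
      _ = ((1/ω) ^ (1/p)) ^ p * Kp ^ p := Real.mul_rpow hc0 hKp0
      _ = (1/ω) * K.toReal := by
          have h1 : ((1/ω) ^ (1/p)) ^ p = 1/ω := by
            rw [← Real.rpow_mul (by positivity), one_div p, inv_mul_cancel₀ hpne,
              Real.rpow_one]
          have h2 : Kp ^ p = K.toReal := by
            rw [hKp, ENNReal.toReal_rpow, ← ENNReal.rpow_mul, one_div p,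
              inv_mul_cancel₀ hpne, ENNReal.rpow_one]
          rw [h1, h2]
  have hconc : ν univ * ENNReal.ofReal (|d| ^ p) ≤ K := by
    calc ν univ * ENNReal.ofReal (|d| ^ p)
        ≤ ν univ * ENNReal.ofReal ((1/ω) * K.toReal) :=
          mul_le_mul_right (ENNReal.ofReal_le_ofReal habs) _
      _ = ν univ * ((ν univ)⁻¹ * K) := by
          rw [ENNReal.ofReal_mul (by positivity), ENNReal.ofReal_toReal Kfin, one_div,
            ENNReal.ofReal_inv_of_pos hωpos, hω, ENNReal.ofReal_toReal hνfin]
      _ = K := by rw [← mul_assoc, ENNReal.mul_inv_cancel hν0 hνfin, one_mul]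
  refine le_trans hconc (le_of_eq ?_)
  exact lintegral_congr fun σ => (ENNReal.ofReal_rpow_of_nonneg (abs_nonneg _) hp0)



/-- Radialisation lemma: for `1 < p < ∞`, a nonnegative measurable radial weight
`x ↦ f(‖x‖)`, a `C¹` function `u` and its radialisation
`ũ(x) = ((1/ω_N) ∫_{S^{N-1}} |u(‖x‖σ)|^p dσ)^{1/p}` (assumed differentiable away
from the origin), one has
`∫ f(‖x‖) |(x/‖x‖)·∇ũ(x)|^p dx ≤ ∫ f(‖x‖) |(x/‖x‖)·∇u(x)|^p dx`. -/
theorem radialisation_lemma (N : ℕ) (hN : 1 ≤ N) (p : ℝ) (hp : 1 < p)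
    (u : EuclideanSpace ℝ (Fin N) → ℝ) (hu : ContDiff ℝ 1 u)
    (f : ℝ → ℝ) (hf : Measurable f) (hf0 : ∀ r, 0 ≤ r → 0 ≤ f r)
    (util : EuclideanSpace ℝ (Fin N) → ℝ)
    (hutil : ∀ x : EuclideanSpace ℝ (Fin N), x ≠ 0 →
      util x = ((1 / sphereArea N) *
        ∫ σ : sphere (0 : EuclideanSpace ℝ (Fin N)) 1,
          |u (‖x‖ • (σ : EuclideanSpace ℝ (Fin N)))| ^ p ∂(sphereMeasure N)) ^ (1 / p))
    (hdiff : ∀ x : EuclideanSpace ℝ (Fin N), x ≠ 0 → DifferentiableAt ℝ util x) :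
    ∫⁻ x : EuclideanSpace ℝ (Fin N),
        ENNReal.ofReal (f ‖x‖) * ENNReal.ofReal (|⟪‖x‖⁻¹ • x, gradient util x⟫| ^ p)
      ≤ ∫⁻ x : EuclideanSpace ℝ (Fin N),
          ENNReal.ofReal (f ‖x‖) * ENNReal.ofReal (|⟪‖x‖⁻¹ • x, gradient u x⟫| ^ p) := by

  classical
  have hp0 : (0:ℝ) ≤ p := by linarith
  haveI hNontriv : Nontrivial (EuclideanSpace ℝ (Fin N)) := by
    refine Module.nontrivial_of_finrank_pos (R := ℝ) (M := EuclideanSpace ℝ (Fin N)) ?_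
    rw [finrank_euclideanSpace_fin]
    exact hN
  haveI hfinite : IsFiniteMeasure (sphereMeasure N) := by
    unfold sphereMeasure; infer_instance
  have hνfin : sphereMeasure N univ ≠ ∞ := measure_ne_top _ _
  have hν0 : sphereMeasure N univ ≠ 0 := by
    have h1 : sphereMeasure N univ =
        (Module.finrank ℝ (EuclideanSpace ℝ (Fin N)) : ℝ≥0∞) *
          volume (ball (0 : EuclideanSpace ℝ (Fin N)) 1) :=
      Measure.toSphere_apply_univ _
    rw [h1, finrank_euclideanSpace_fin]
    exact mul_ne_zero (Nat.cast_ne_zero.2 (by omega))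
      (measure_ball_pos _ _ one_pos).ne'
  -- the radial profile
  set g : ℝ → ℝ := fun t => ((1 / sphereArea N) *
    ∫ σ : sphere (0 : EuclideanSpace ℝ (Fin N)) 1,
      |u (t • (σ : EuclideanSpace ℝ (Fin N)))| ^ p ∂(sphereMeasure N)) ^ (1 / p) with hgdef
  have hgu : ∀ x : EuclideanSpace ℝ (Fin N), x ≠ 0 → util x = g ‖x‖ :=
    fun x hx => hutil x hx
  have hDer : ∀ x : EuclideanSpace ℝ (Fin N), x ≠ 0 →
      HasDerivAt g ⟪‖x‖⁻¹ • x, gradient util x⟫ ‖x‖ :=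
    fun x hx => aux_hasDerivAt_radial util g hgu hx (hdiff x hx)
  have hDval : ∀ x : EuclideanSpace ℝ (Fin N), x ≠ 0 →
      ⟪‖x‖⁻¹ • x, gradient util x⟫ = deriv g ‖x‖ :=
    fun x hx => ((hDer x hx).deriv).symm
  -- measurability
  have habsp : Measurable fun s : ℝ => |s| ^ p :=
    (continuous_abs.rpow_const fun _ => Or.inr hp0).measurable
  set G : ℝ → ℝ≥0∞ := fun t =>
    ENNReal.ofReal (f t) * ENNReal.ofReal (|deriv g t| ^ p) with hGdef
  have hGmeas : Measurable G :=
    (hf.ennreal_ofReal).mul ((habsp.comp (measurable_deriv g)).ennreal_ofReal)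
  have hgradu : Continuous (gradient u) := by
    have h1 : gradient u = fun x =>
        (InnerProductSpace.toDual ℝ (EuclideanSpace ℝ (Fin N))).symm (fderiv ℝ u x) := rfl
    rw [h1]
    exact (InnerProductSpace.toDual ℝ _).symm.continuous.comp (hu.continuous_fderiv one_ne_zero)
  have hRmeas : Measurable fun x : EuclideanSpace ℝ (Fin N) =>
      ENNReal.ofReal (f ‖x‖) * ENNReal.ofReal (|⟪‖x‖⁻¹ • x, gradient u x⟫| ^ p) := by
    refine ((hf.comp measurable_norm).ennreal_ofReal).mul ?_
    refine Measurable.ennreal_ofReal (habsp.comp ?_)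
    exact Measurable.inner ((measurable_norm.inv).smul measurable_id) hgradu.measurable
  -- almost everywhere nonzero
  have hae : ∀ᵐ x : EuclideanSpace ℝ (Fin N) ∂volume, x ≠ 0 := by
    rw [ae_iff]
    simpa using measure_singleton (0 : EuclideanSpace ℝ (Fin N))
  -- replace the integrand on the left
  have hLHS : (∫⁻ x : EuclideanSpace ℝ (Fin N),
      ENNReal.ofReal (f ‖x‖) * ENNReal.ofReal (|⟪‖x‖⁻¹ • x, gradient util x⟫| ^ p))
      = ∫⁻ x : EuclideanSpace ℝ (Fin N), G ‖x‖ := by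
    refine lintegral_congr_ae ?_
    filter_upwards [hae] with x hx
    rw [hGdef]
    simp only
    rw [hDval x hx]
  -- polar coordinates
  have hpolar : ∀ (Φ : EuclideanSpace ℝ (Fin N) → ℝ≥0∞), Measurable Φ →
      (∫⁻ x : EuclideanSpace ℝ (Fin N), Φ x)
      = ∫⁻ y : sphere (0 : EuclideanSpace ℝ (Fin N)) 1 × Ioi (0:ℝ),
          Φ ((y.2 : ℝ) • (y.1 : EuclideanSpace ℝ (Fin N)))
          ∂((sphereMeasure N).prod (Measure.volumeIoiPow (N - 1))) := by
    intro Φ hΦ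
    have h0 : (∫⁻ x : EuclideanSpace ℝ (Fin N), Φ x)
        = ∫⁻ x in ({0}ᶜ : Set (EuclideanSpace ℝ (Fin N))), Φ x := by
      rw [MeasureTheory.restrict_compl_singleton]
    rw [h0, ← lintegral_subtype_comap (measurableSet_singleton
      (0 : EuclideanSpace ℝ (Fin N))).compl]
    simp only [sphereMeasure]
    have hmp := (volume :
      Measure (EuclideanSpace ℝ (Fin N))).measurePreserving_homeomorphUnitSphereProd
    rw [show Module.finrank ℝ (EuclideanSpace ℝ (Fin N)) = N from
      finrank_euclideanSpace_fin] at hmp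
    have hΨ : Measurable fun y : sphere (0 : EuclideanSpace ℝ (Fin N)) 1 × Ioi (0:ℝ) =>
        Φ ((y.2 : ℝ) • (y.1 : EuclideanSpace ℝ (Fin N))) :=
      hΦ.comp ((measurable_subtype_coe.comp measurable_snd).smul
        (measurable_subtype_coe.comp measurable_fst))
    rw [← hmp.lintegral_comp hΨ]
    refine lintegral_congr fun x => ?_
    have hx0 : (x : EuclideanSpace ℝ (Fin N)) ≠ 0 := x.2
    simp only [homeomorphUnitSphereProd_apply_snd_coe,
      homeomorphUnitSphereProd_apply_fst_coe]
    rw [smul_inv_smul₀ (norm_ne_zero_iff.2 hx0)]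
  -- apply polar coordinates to both sides
  have hnorm_smul : ∀ (y : sphere (0 : EuclideanSpace ℝ (Fin N)) 1 × Ioi (0:ℝ)),
      ‖(y.2 : ℝ) • (y.1 : EuclideanSpace ℝ (Fin N))‖ = (y.2 : ℝ) := by
    intro y
    rw [norm_smul, mem_sphere_zero_iff_norm.1 y.1.2, mul_one, Real.norm_eq_abs,
      abs_of_pos y.2.2]
  have hL2 : (∫⁻ x : EuclideanSpace ℝ (Fin N), G ‖x‖)
      = ∫⁻ y : sphere (0 : EuclideanSpace ℝ (Fin N)) 1 × Ioi (0:ℝ),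
          G (y.2 : ℝ) ∂((sphereMeasure N).prod (Measure.volumeIoiPow (N - 1))) := by
    rw [hpolar (fun x => G ‖x‖) (hGmeas.comp measurable_norm)]
    exact lintegral_congr fun y => by rw [hnorm_smul y]
  have hR2 : (∫⁻ x : EuclideanSpace ℝ (Fin N),
      ENNReal.ofReal (f ‖x‖) * ENNReal.ofReal (|⟪‖x‖⁻¹ • x, gradient u x⟫| ^ p))
      = ∫⁻ y : sphere (0 : EuclideanSpace ℝ (Fin N)) 1 × Ioi (0:ℝ),
          ENNReal.ofReal (f (y.2 : ℝ)) * ENNReal.ofReal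
            (|fderiv ℝ u ((y.2 : ℝ) • (y.1 : EuclideanSpace ℝ (Fin N)))
              (y.1 : EuclideanSpace ℝ (Fin N))| ^ p)
          ∂((sphereMeasure N).prod (Measure.volumeIoiPow (N - 1))) := by
    rw [hpolar _ hRmeas]
    refine lintegral_congr fun y => ?_
    have hy2 : (0:ℝ) < (y.2 : ℝ) := y.2.2
    rw [hnorm_smul y, inv_smul_smul₀ hy2.ne',
      inner_gradient_eq u ((y.2 : ℝ) • (y.1 : EuclideanSpace ℝ (Fin N)))
        (y.1 : EuclideanSpace ℝ (Fin N))]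
  -- Tonelli on both sides
  have hmeasH : Measurable fun y : sphere (0 : EuclideanSpace ℝ (Fin N)) 1 × Ioi (0:ℝ) =>
      ENNReal.ofReal (f (y.2 : ℝ)) * ENNReal.ofReal
        (|fderiv ℝ u ((y.2 : ℝ) • (y.1 : EuclideanSpace ℝ (Fin N)))
          (y.1 : EuclideanSpace ℝ (Fin N))| ^ p) := by
    refine ((hf.comp (measurable_subtype_coe.comp measurable_snd)).ennreal_ofReal).mul ?_
    refine Measurable.ennreal_ofReal (habsp.comp ?_)
    have hcont : Continuous fun y : sphere (0 : EuclideanSpace ℝ (Fin N)) 1 × Ioi (0:ℝ) =>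
        fderiv ℝ u ((y.2 : ℝ) • (y.1 : EuclideanSpace ℝ (Fin N)))
          (y.1 : EuclideanSpace ℝ (Fin N)) := by
      refine Continuous.clm_apply ?_ (continuous_subtype_val.comp continuous_fst)
      exact (hu.continuous_fderiv one_ne_zero).comp
        (((continuous_subtype_val.comp continuous_snd).smul
          (continuous_subtype_val.comp continuous_fst)))
    exact hcont.measurable
  have hT1 : (∫⁻ y : sphere (0 : EuclideanSpace ℝ (Fin N)) 1 × Ioi (0:ℝ),
      G (y.2 : ℝ) ∂((sphereMeasure N).prod (Measure.volumeIoiPow (N - 1))))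
      = ∫⁻ r : Ioi (0:ℝ), sphereMeasure N univ * G (r : ℝ)
          ∂(Measure.volumeIoiPow (N - 1)) := by
    rw [lintegral_prod_symm
      (fun y : sphere (0 : EuclideanSpace ℝ (Fin N)) 1 × Ioi (0:ℝ) => G (y.2 : ℝ))
      ((hGmeas.comp (measurable_subtype_coe.comp measurable_snd)).aemeasurable)]
    refine lintegral_congr fun r => ?_
    simp only [lintegral_const]; rw [mul_comm]
  have hT2 : (∫⁻ y : sphere (0 : EuclideanSpace ℝ (Fin N)) 1 × Ioi (0:ℝ),
      ENNReal.ofReal (f (y.2 : ℝ)) * ENNReal.ofReal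
        (|fderiv ℝ u ((y.2 : ℝ) • (y.1 : EuclideanSpace ℝ (Fin N)))
          (y.1 : EuclideanSpace ℝ (Fin N))| ^ p)
      ∂((sphereMeasure N).prod (Measure.volumeIoiPow (N - 1))))
      = ∫⁻ r : Ioi (0:ℝ), (∫⁻ σ : sphere (0 : EuclideanSpace ℝ (Fin N)) 1,
          ENNReal.ofReal (f (r : ℝ)) * ENNReal.ofReal
            (|fderiv ℝ u ((r : ℝ) • (σ : EuclideanSpace ℝ (Fin N)))
              (σ : EuclideanSpace ℝ (Fin N))| ^ p) ∂(sphereMeasure N))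
          ∂(Measure.volumeIoiPow (N - 1)) :=
    lintegral_prod_symm _ hmeasH.aemeasurable
  -- pointwise comparison in the radial variable
  have hpoint : ∀ r : Ioi (0:ℝ), sphereMeasure N univ * G (r : ℝ)
      ≤ ∫⁻ σ : sphere (0 : EuclideanSpace ℝ (Fin N)) 1,
          ENNReal.ofReal (f (r : ℝ)) * ENNReal.ofReal
            (|fderiv ℝ u ((r : ℝ) • (σ : EuclideanSpace ℝ (Fin N)))
              (σ : EuclideanSpace ℝ (Fin N))| ^ p) ∂(sphereMeasure N) := by
    intro r
    have hr : (0:ℝ) < (r : ℝ) := r.2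
    obtain ⟨v, hv⟩ := exists_norm_eq (EuclideanSpace ℝ (Fin N)) (zero_le_one)
    set x : EuclideanSpace ℝ (Fin N) := (r : ℝ) • v with hxdef
    have hxnorm : ‖x‖ = (r : ℝ) := by
      rw [hxdef, norm_smul, hv, mul_one, Real.norm_eq_abs, abs_of_pos hr]
    have hx0 : x ≠ 0 := by
      rw [hxdef]
      exact smul_ne_zero hr.ne' (by intro h; rw [h] at hv; simp at hv)
    have hder : HasDerivAt g (deriv g (r : ℝ)) (r : ℝ) := by
      have := hDer x hx0
      rw [hxnorm] at this
      exact this.deriv ▸ this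
    have hcore := aux_core hp u hu (sphereMeasure N) hν0 g
      (fun t => rfl) hder
    calc sphereMeasure N univ * G (r : ℝ)
        = ENNReal.ofReal (f (r : ℝ)) *
            (sphereMeasure N univ * ENNReal.ofReal (|deriv g (r : ℝ)| ^ p)) := by
          rw [hGdef]; ring
      _ ≤ ENNReal.ofReal (f (r : ℝ)) *
            ∫⁻ σ : sphere (0 : EuclideanSpace ℝ (Fin N)) 1,
              ENNReal.ofReal (|fderiv ℝ u ((r : ℝ) • (σ : EuclideanSpace ℝ (Fin N)))
                (σ : EuclideanSpace ℝ (Fin N))| ^ p) ∂(sphereMeasure N) :=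
          mul_le_mul_right hcore _
      _ = _ := (lintegral_const_mul' _ _ ENNReal.ofReal_ne_top).symm
  -- put everything together
  rw [hLHS, hL2, hT1, hR2, hT2]
  exact lintegral_mono fun r => hpoint r
end

section
/- Let N ≥ 1 be an integer, 1 < p < ∞, and let u : ℝ^N → ℝ be continuously differentiable. For r > 0 set R(r) = ( (1/ω_N) ∫_{S^{N−1}} |u(rσ)|^p dσ )^{1/p}. If R is differentiable at r > 0, then |R′(r)|^p ≤ (1/ω_N) ∫_{S^{N−1}} | σ · ∇u(rσ) |^p dσ. -/
open MeasureTheory Metric Set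
open scoped ENNReal RealInnerProductSpace

/-- Pointwise Hölder estimate at the core of the radialisation lemma: for a `C¹`
function `u` on `ℝ^N` and `R(r) = ((1/ω_N) ∫_{S^{N-1}} |u(rσ)|^p dσ)^{1/p}`, if `R`
is differentiable at `r > 0` then
`|R'(r)|^p ≤ (1/ω_N) ∫_{S^{N-1}} |σ·∇u(rσ)|^p dσ`. -/
theorem radialisation_pointwise (N : ℕ) (hN : 1 ≤ N) (p : ℝ) (hp : 1 < p)
    (u : EuclideanSpace ℝ (Fin N) → ℝ) (hu : ContDiff ℝ 1 u)
    (R : ℝ → ℝ)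
    (hR : ∀ r : ℝ, 0 < r →
      R r = ((1 / sphereArea N) *
        ∫ σ : sphere (0 : EuclideanSpace ℝ (Fin N)) 1,
          |u (r • (σ : EuclideanSpace ℝ (Fin N)))| ^ p ∂(sphereMeasure N)) ^ (1 / p))
    (r : ℝ) (hr : 0 < r) (hdiff : DifferentiableAt ℝ R r) :
    |deriv R r| ^ p ≤ (1 / sphereArea N) *
      ∫ σ : sphere (0 : EuclideanSpace ℝ (Fin N)) 1,
        |⟪(σ : EuclideanSpace ℝ (Fin N)),
          gradient u (r • (σ : EuclideanSpace ℝ (Fin N)))⟫| ^ p ∂(sphereMeasure N) := by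
  classical
  set μ := sphereMeasure N with hμ
  haveI : IsFiniteMeasure μ :=
    inferInstanceAs (IsFiniteMeasure (volume : Measure (EuclideanSpace ℝ (Fin N))).toSphere)
  have hp0 : (0 : ℝ) < p := lt_trans one_pos hp
  -- basic facts about the measure
  have hμuniv_ne_top : μ univ ≠ ∞ := measure_ne_top μ univ
  have hμuniv_pos : 0 < μ univ := by
    show 0 < (volume : Measure (EuclideanSpace ℝ (Fin N))).toSphere univ
    rw [Measure.toSphere_apply_univ]
    have h2 : (Module.finrank ℝ (EuclideanSpace ℝ (Fin N))) = N := finrank_euclideanSpace_fin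
    rw [h2]
    have hN0 : ((N : ℝ≥0∞)) ≠ 0 := by exact_mod_cast Nat.pos_of_ne_zero (by omega) |>.ne'
    exact ENNReal.mul_pos hN0 (measure_ball_pos _ _ one_pos).ne'
  have hμ0 : μ ≠ 0 := by
    intro h
    rw [h] at hμuniv_pos; simp at hμuniv_pos
  set ω := sphereArea N with hω
  have hωpos : 0 < ω := ENNReal.toReal_pos hμuniv_pos.ne' hμuniv_ne_top
  -- the exponent as an extended real
  set q : ℝ≥0∞ := ENNReal.ofReal p with hq
  have hq0 : q ≠ 0 := (ENNReal.ofReal_pos.mpr hp0).ne'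
  have hqtop : q ≠ ∞ := ENNReal.ofReal_ne_top
  have hq1 : 1 ≤ q := by
    rw [hq, ← ENNReal.ofReal_one]
    exact ENNReal.ofReal_le_ofReal hp.le
  have hqtoReal : q.toReal = p := ENNReal.toReal_ofReal hp0.le
  -- continuous functions on the sphere are in Lᵖ
  have memLp : ∀ h : (sphere (0 : EuclideanSpace ℝ (Fin N)) 1) → ℝ,
      Continuous h → MemLp h q μ := by
    intro h hc
    obtain ⟨C, hC⟩ := isCompact_univ.exists_bound_of_continuousOn hc.continuousOn
    exact MemLp.of_bound hc.aestronglyMeasurable C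
      (Filter.Eventually.of_forall fun σ => hC σ (mem_univ σ))
  -- the functions under consideration
  set f : ℝ → (sphere (0 : EuclideanSpace ℝ (Fin N)) 1) → ℝ :=
    fun s σ => u (s • (σ : EuclideanSpace ℝ (Fin N))) with hf
  set g : (sphere (0 : EuclideanSpace ℝ (Fin N)) 1) → ℝ :=
    fun σ => ⟪(σ : EuclideanSpace ℝ (Fin N)),
      gradient u (r • (σ : EuclideanSpace ℝ (Fin N)))⟫ with hg
  have hfc : ∀ s : ℝ, Continuous (f s) := fun s =>
    hu.continuous.comp (continuous_subtype_val.const_smul s)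
  have hgradc : Continuous (gradient u) := by
    show Continuous fun x => (InnerProductSpace.toDual ℝ (EuclideanSpace ℝ (Fin N))).symm
      (fderiv ℝ u x)
    exact (InnerProductSpace.toDual ℝ (EuclideanSpace ℝ (Fin N))).symm.continuous.comp
      (hu.continuous_fderiv one_ne_zero)
  have hgc : Continuous g :=
    continuous_subtype_val.inner (hgradc.comp (continuous_subtype_val.const_smul r))
  -- real-valued Lᵖ norm
  set Np : ((sphere (0 : EuclideanSpace ℝ (Fin N)) 1) → ℝ) → ℝ :=
    fun h => (eLpNorm h q μ).toReal with hNpdef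
  have hNp : ∀ h : (sphere (0 : EuclideanSpace ℝ (Fin N)) 1) → ℝ,
      Continuous h → Np h = (∫ σ, |h σ| ^ p ∂μ) ^ (1 / p) := by
    intro h hc
    have h1 := (memLp h hc).eLpNorm_eq_integral_rpow_norm hq0 hqtop
    have h2 : (0 : ℝ) ≤ ∫ a, ‖h a‖ ^ q.toReal ∂μ :=
      integral_nonneg fun a => Real.rpow_nonneg (norm_nonneg _) _
    show (eLpNorm h q μ).toReal = _
    rw [h1, ENNReal.toReal_ofReal (Real.rpow_nonneg h2 _)]
    simp only [hqtoReal, Real.norm_eq_abs, one_div]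
  -- `R` in terms of `Np`
  have hRNp : ∀ s : ℝ, 0 < s → R s = (1 / ω) ^ (1 / p) * Np (f s) := by
    intro s hs
    rw [hR s hs, hNp (f s) (hfc s)]
    have h2 : (0 : ℝ) ≤ ∫ σ, |f s σ| ^ p ∂μ :=
      integral_nonneg fun a => Real.rpow_nonneg (abs_nonneg _) _
    rw [Real.mul_rpow (by positivity) h2]
  -- reverse triangle inequality
  have hNp_tri : ∀ h₁ h₂ : (sphere (0 : EuclideanSpace ℝ (Fin N)) 1) → ℝ,
      Continuous h₁ → Continuous h₂ → |Np h₁ - Np h₂| ≤ Np (h₁ - h₂) := by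
    intro h₁ h₂ hc₁ hc₂
    have key : ∀ a b : (sphere (0 : EuclideanSpace ℝ (Fin N)) 1) → ℝ, Continuous a →
        Continuous b → Np a ≤ Np (a - b) + Np b := by
      intro a b hca hcb
      have h1 : eLpNorm a q μ ≤ eLpNorm (a - b) q μ + eLpNorm b q μ := by
        have hab : a = (a - b) + b := by ext x; simp
        nth_rewrite 1 [hab]
        exact eLpNorm_add_le ((hca.sub hcb).aestronglyMeasurable)
          hcb.aestronglyMeasurable hq1
      have h2 : eLpNorm (a - b) q μ ≠ ∞ := (memLp _ (hca.sub hcb)).eLpNorm_ne_top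
      have h3 : eLpNorm b q μ ≠ ∞ := (memLp _ hcb).eLpNorm_ne_top
      calc Np a ≤ (eLpNorm (a - b) q μ + eLpNorm b q μ).toReal :=
            ENNReal.toReal_mono (ENNReal.add_ne_top.mpr ⟨h2, h3⟩) h1
        _ = Np (a - b) + Np b := ENNReal.toReal_add h2 h3
    rw [abs_sub_le_iff]
    constructor
    · have := key h₁ h₂ hc₁ hc₂; linarith
    · have := key h₂ h₁ hc₂ hc₁
      have heq : Np (h₂ - h₁) = Np (h₁ - h₂) := by
        show (eLpNorm (h₂ - h₁) q μ).toReal = (eLpNorm (h₁ - h₂) q μ).toReal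
        rw [eLpNorm_sub_comm]
      linarith
    -- key uniform estimate
  have key : ∀ ε : ℝ, 0 < ε → ∃ δ : ℝ, 0 < δ ∧ δ ≤ 1 ∧ ∀ s : ℝ, r < s → s < r + δ →
      Np (f s - f r) ≤ (s - r) * (Np g + ε * (μ univ).toReal ^ (1 / p)) := by
    intro ε hε
    set Φ : ℝ × EuclideanSpace ℝ (Fin N) → ℝ :=
      fun z => ⟪z.2, gradient u (z.1 • z.2)⟫ with hΦ
    have hΦc : Continuous Φ :=
      continuous_snd.inner (hgradc.comp (continuous_fst.smul continuous_snd))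
    set K : Set (ℝ × EuclideanSpace ℝ (Fin N)) :=
      Icc r (r + 1) ×ˢ (sphere (0 : EuclideanSpace ℝ (Fin N)) 1) with hK
    have hKc : IsCompact K := isCompact_Icc.prod (isCompact_sphere _ _)
    have hUC := hKc.uniformContinuousOn_of_continuous hΦc.continuousOn
    rw [Metric.uniformContinuousOn_iff] at hUC
    obtain ⟨δ₀, hδ₀, hδ₀'⟩ := hUC ε hε
    refine ⟨min δ₀ 1, lt_min hδ₀ one_pos, min_le_right _ _, ?_⟩
    intro s hs hs'
    have hsr : 0 < s - r := by linarith
    have hs1 : s ≤ r + 1 := by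
      have := min_le_right δ₀ 1; linarith
    -- pointwise estimate via the mean value inequality
    have hpt : ∀ σ : sphere (0 : EuclideanSpace ℝ (Fin N)) 1,
        |f s σ - f r σ| ≤ (|g σ| + ε) * (s - r) := by
      intro σ
      have hder : ∀ t : ℝ, HasDerivAt (fun t : ℝ => u (t • (σ : EuclideanSpace ℝ (Fin N))))
          (Φ (t, (σ : EuclideanSpace ℝ (Fin N)))) t := by
        intro t
        have h1 : HasDerivAt (fun t : ℝ => t • (σ : EuclideanSpace ℝ (Fin N)))
            ((σ : EuclideanSpace ℝ (Fin N))) t := by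
          simpa using (hasDerivAt_id t).smul_const (σ : EuclideanSpace ℝ (Fin N))
        have h2 := ((hu.differentiable one_ne_zero)
          (t • (σ : EuclideanSpace ℝ (Fin N)))).hasFDerivAt.comp_hasDerivAt t h1
        convert h2 using 1
        show ⟪(σ : EuclideanSpace ℝ (Fin N)),
          gradient u (t • (σ : EuclideanSpace ℝ (Fin N)))⟫ = _
        rw [real_inner_comm, ← InnerProductSpace.toDual_apply_apply]
        simp [gradient]
        all_goals rfl
      have hbound : ∀ t ∈ Ico r s, ‖Φ (t, (σ : EuclideanSpace ℝ (Fin N)))‖ ≤ |g σ| + ε := by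
        intro t ht
        have hmem1 : (t, (σ : EuclideanSpace ℝ (Fin N))) ∈ K :=
          ⟨⟨ht.1, by linarith [ht.2]⟩, σ.2⟩
        have hmem2 : (r, (σ : EuclideanSpace ℝ (Fin N))) ∈ K :=
          ⟨⟨le_refl r, by linarith⟩, σ.2⟩
        have hdist : dist (t, (σ : EuclideanSpace ℝ (Fin N)))
            (r, (σ : EuclideanSpace ℝ (Fin N))) < δ₀ := by
          rw [Prod.dist_eq]
          have h1 : dist t r < δ₀ := by
            rw [Real.dist_eq, abs_of_nonneg (by linarith [ht.1])]
            have := min_le_left δ₀ 1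
            linarith [ht.2]
          exact max_lt h1 (by rw [dist_self]; exact hδ₀)
        have hlt := hδ₀' _ hmem1 _ hmem2 hdist
        rw [Real.dist_eq] at hlt
        have hgσ : Φ (r, (σ : EuclideanSpace ℝ (Fin N))) = g σ := rfl
        rw [Real.norm_eq_abs]
        calc |Φ (t, (σ : EuclideanSpace ℝ (Fin N)))|
            ≤ |Φ (r, (σ : EuclideanSpace ℝ (Fin N)))| +
              |Φ (t, (σ : EuclideanSpace ℝ (Fin N))) -
               Φ (r, (σ : EuclideanSpace ℝ (Fin N)))| := by
              have := abs_sub_abs_le_abs_sub (Φ (t, (σ : EuclideanSpace ℝ (Fin N))))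
                (Φ (r, (σ : EuclideanSpace ℝ (Fin N))))
              linarith [abs_nonneg (Φ (t, (σ : EuclideanSpace ℝ (Fin N))))]
          _ ≤ |g σ| + ε := by rw [hgσ]; linarith [hlt]
      have hmvt := norm_image_sub_le_of_norm_deriv_le_segment'
        (f := fun t : ℝ => u (t • (σ : EuclideanSpace ℝ (Fin N))))
        (f' := fun t : ℝ => Φ (t, (σ : EuclideanSpace ℝ (Fin N))))
        (fun t _ => (hder t).hasDerivWithinAt) hbound s (right_mem_Icc.2 hs.le)
      simpa [Real.norm_eq_abs] using hmvt
    -- pass to the `Lᵖ` norm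
    have hmono : eLpNorm (f s - f r) q μ ≤
        eLpNorm ((s - r) • (fun σ => |g σ| + ε)) q μ := by
      apply eLpNorm_mono_real
      intro σ
      rw [Pi.sub_apply, Real.norm_eq_abs]
      calc |f s σ - f r σ| ≤ (|g σ| + ε) * (s - r) := hpt σ
        _ = (s - r) • (fun σ => |g σ| + ε) σ := by simp [smul_eq_mul]; ring
    have h2 : eLpNorm ((s - r) • (fun σ => |g σ| + ε)) q μ
        = (‖s - r‖₊ : ℝ≥0∞) * eLpNorm (fun σ => |g σ| + ε) q μ := eLpNorm_const_smul _ _ _ _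
    have h3 : eLpNorm (fun σ => |g σ| + ε) q μ
        ≤ eLpNorm (fun σ => |g σ|) q μ + eLpNorm (fun _ => ε) q μ :=
      eLpNorm_add_le hgc.abs.aestronglyMeasurable aestronglyMeasurable_const hq1
    have h4 : eLpNorm (fun σ => |g σ|) q μ = eLpNorm g q μ := by
      simpa [Real.norm_eq_abs] using eLpNorm_norm (f := g) (p := q) (μ := μ)
    have h5 : eLpNorm (fun _ : sphere (0 : EuclideanSpace ℝ (Fin N)) 1 => ε) q μ
        = (‖ε‖₊ : ℝ≥0∞) * μ univ ^ (1 / q.toReal) := eLpNorm_const ε hq0 hμ0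
    have hfin_g : eLpNorm g q μ ≠ ∞ := (memLp g hgc).eLpNorm_ne_top
    have hfin_pow : μ univ ^ (1 / q.toReal) ≠ ∞ :=
      ENNReal.rpow_ne_top_of_nonneg (by rw [hqtoReal]; positivity) hμuniv_ne_top
    have htot : eLpNorm (f s - f r) q μ ≤
        (‖s - r‖₊ : ℝ≥0∞) * (eLpNorm g q μ + (‖ε‖₊ : ℝ≥0∞) * μ univ ^ (1 / q.toReal)) := by
      calc eLpNorm (f s - f r) q μ
          ≤ eLpNorm ((s - r) • (fun σ => |g σ| + ε)) q μ := hmono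
        _ = (‖s - r‖₊ : ℝ≥0∞) * eLpNorm (fun σ => |g σ| + ε) q μ := h2
        _ ≤ (‖s - r‖₊ : ℝ≥0∞) * (eLpNorm g q μ + (‖ε‖₊ : ℝ≥0∞) * μ univ ^ (1 / q.toReal)) := by
            rw [← h4, ← h5]
            exact mul_le_mul_right h3 _
    have hRHSfin : (‖s - r‖₊ : ℝ≥0∞) *
        (eLpNorm g q μ + (‖ε‖₊ : ℝ≥0∞) * μ univ ^ (1 / q.toReal)) ≠ ∞ := by
      apply ENNReal.mul_ne_top ENNReal.coe_ne_top
      exact ENNReal.add_ne_top.mpr ⟨hfin_g, ENNReal.mul_ne_top ENNReal.coe_ne_top hfin_pow⟩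
    have := ENNReal.toReal_mono hRHSfin htot
    refine le_trans this (le_of_eq ?_)
    rw [ENNReal.toReal_mul, ENNReal.toReal_add hfin_g
      (ENNReal.mul_ne_top ENNReal.coe_ne_top hfin_pow), ENNReal.toReal_mul]
    rw [ENNReal.coe_toReal, ENNReal.coe_toReal, coe_nnnorm, coe_nnnorm,
      Real.norm_eq_abs, Real.norm_eq_abs, abs_of_pos hsr, abs_of_pos hε,
      ← ENNReal.toReal_rpow, hqtoReal]
  -- bound on the derivative, for every positive ε
  have habs : ∀ ε : ℝ, 0 < ε →
      |deriv R r| ≤ (1 / ω) ^ (1 / p) * (Np g + ε * (μ univ).toReal ^ (1 / p)) := by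
    intro ε hε
    obtain ⟨δ, hδ, hδ1, hkey⟩ := key ε hε
    have htend : Filter.Tendsto (slope R r) (nhdsWithin r (Ioi r)) (nhds (deriv R r)) := by
      have h1 := hasDerivAt_iff_tendsto_slope.1 hdiff.hasDerivAt
      exact h1.mono_left (nhdsWithin_mono _ fun x hx =>
        mem_compl_singleton_iff.mpr (LT.lt.ne' (mem_Ioi.mp hx)))
    apply le_of_tendsto htend.abs
    filter_upwards [Ioo_mem_nhdsGT (show r < r + δ by linarith)] with s hs
    have hs0 : 0 < s := lt_trans hr hs.1
    have hsr : 0 < s - r := by linarith [hs.1]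
    have h1 : |R s - R r| ≤
        (s - r) * ((1 / ω) ^ (1 / p) * (Np g + ε * (μ univ).toReal ^ (1 / p))) := by
      rw [hRNp s hs0, hRNp r hr]
      have h2 : |(1 / ω) ^ (1 / p) * Np (f s) - (1 / ω) ^ (1 / p) * Np (f r)|
          = (1 / ω) ^ (1 / p) * |Np (f s) - Np (f r)| := by
        rw [← mul_sub, abs_mul, abs_of_nonneg (by positivity)]
      rw [h2]
      have h3 := hNp_tri (f s) (f r) (hfc s) (hfc r)
      have h4 := hkey s hs.1 hs.2
      have hc : (0 : ℝ) ≤ (1 / ω) ^ (1 / p) := by positivity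
      calc (1 / ω) ^ (1 / p) * |Np (f s) - Np (f r)|
          ≤ (1 / ω) ^ (1 / p) * ((s - r) * (Np g + ε * (μ univ).toReal ^ (1 / p))) :=
            mul_le_mul_of_nonneg_left (le_trans h3 h4) hc
        _ = (s - r) * ((1 / ω) ^ (1 / p) * (Np g + ε * (μ univ).toReal ^ (1 / p))) := by ring
    rw [slope_def_field, abs_div, abs_of_pos hsr, div_le_iff₀ hsr]
    calc |R s - R r|
        ≤ (s - r) * ((1 / ω) ^ (1 / p) * (Np g + ε * (μ univ).toReal ^ (1 / p))) := h1
      _ = (1 / ω) ^ (1 / p) * (Np g + ε * (μ univ).toReal ^ (1 / p)) * (s - r) := by ring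
  -- let ε → 0
  have hfinal : |deriv R r| ≤ (1 / ω) ^ (1 / p) * Np g := by
    set C : ℝ := (1 / ω) ^ (1 / p) * (μ univ).toReal ^ (1 / p) with hC
    have hC0 : 0 ≤ C := by positivity
    apply le_of_forall_sub_le
    intro ε' hε'
    rw [sub_le_iff_le_add']
    have hεpos : 0 < ε' / (C + 1) := by positivity
    have h1 := habs (ε' / (C + 1)) hεpos
    have h2 : (1 / ω) ^ (1 / p) * (Np g + ε' / (C + 1) * (μ univ).toReal ^ (1 / p))
        = (1 / ω) ^ (1 / p) * Np g + ε' / (C + 1) * C := by rw [hC]; ring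
    have h3 : ε' / (C + 1) * C ≤ ε' := by
      have h4 : ε' / (C + 1) * (C + 1) = ε' := div_mul_cancel₀ _ (by positivity)
      nlinarith
    rw [h2] at h1
    linarith
  -- conclude by raising to the power `p`
  have hNg : 0 ≤ Np g := ENNReal.toReal_nonneg
  have hrpow := Real.rpow_le_rpow (abs_nonneg _) hfinal hp0.le
  refine le_trans hrpow (le_of_eq ?_)
  have hint : (0 : ℝ) ≤ ∫ σ, |g σ| ^ p ∂μ :=
    integral_nonneg fun a => Real.rpow_nonneg (abs_nonneg _) _
  rw [Real.mul_rpow (by positivity) hNg, hNp g hgc]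
  simp only [one_div]
  rw [Real.rpow_inv_rpow (by positivity) (ne_of_gt hp0),
    Real.rpow_inv_rpow hint (ne_of_gt hp0)]
end
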